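/- arXiv:1601.02229 — 7 statements merged into one kernel-verified Lean document; each statement's English description precedes it below -/
import Mathlib

section
/- The sequence π_opt(G_{n×n})/n² converges as n → ∞, where π_opt denotes the optimal pebbling number of the n×n grid graph. -/
/-- A pebbling move: remove two pebbles from `u`, add one pebble at a neighbour `v`. -/
def PebblingMove {V : Type*} [DecidableEq V] (G : SimpleGraph V) (D D' : V → ℕ) : Prop :=
  ∃ u v, G.Adj u v ∧ 2 ≤ D u ∧
    D' = Function.update (Function.update D u (D u - 2)) v (D v + 1)

/-- `t` is reachable under `D`: some sequence of pebbling moves puts a pebble on `t`. -/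
def PebbleReachable {V : Type*} [DecidableEq V] (G : SimpleGraph V) (D : V → ℕ) (t : V) : Prop :=
  ∃ D', Relation.ReflTransGen (PebblingMove G) D D' ∧ 1 ≤ D' t

/-- `D` is solvable if every vertex is reachable under it. -/
def SolvableDistr {V : Type*} [DecidableEq V] (G : SimpleGraph V) (D : V → ℕ) : Prop :=
  ∀ t, PebbleReachable G D t

/-- The `r × c` grid graph. -/
def fgrid (r c : ℕ) : SimpleGraph (Fin r × Fin c) where
  Adj p q := ((p.1 : ℤ) - q.1).natAbs + ((p.2 : ℤ) - q.2).natAbs = 1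
  symm := ⟨by intro p q h; omega⟩
  loopless := ⟨by intro p h; simp at h⟩

/-- Optimal pebbling number of the `n × n` grid. -/
noncomputable def piOpt (n : ℕ) : ℕ :=
  sInf {s : ℕ | ∃ D : Fin n × Fin n → ℕ, SolvableDistr (fgrid n n) D ∧ ∑ v, D v = s}

set_option linter.unusedSectionVars false

section Mono
variable {V : Type*} [DecidableEq V] {G : SimpleGraph V}

lemma move_mono {D E D' : V → ℕ} (h : PebblingMove G D E) (hle : ∀ w, D w ≤ D' w) :
    ∃ E', PebblingMove G D' E' ∧ ∀ w, E w ≤ E' w := by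
  obtain ⟨u, v, hadj, h2, rfl⟩ := h
  refine ⟨_, ⟨u, v, hadj, le_trans h2 (hle u), rfl⟩, ?_⟩
  intro w
  have huv : u ≠ v := G.ne_of_adj hadj
  have := hle u; have := hle v; have := hle w
  by_cases hv : w = v <;> by_cases hu : w = u <;>
    simp [Function.update_apply, hv, hu, huv] <;> omega

lemma rtg_mono {D E : V → ℕ} (h : Relation.ReflTransGen (PebblingMove G) D E) :
    ∀ D' : V → ℕ, (∀ w, D w ≤ D' w) →
      ∃ E', Relation.ReflTransGen (PebblingMove G) D' E' ∧ ∀ w, E w ≤ E' w := by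
  induction h with
  | refl => exact fun D' hle => ⟨D', Relation.ReflTransGen.refl, hle⟩
  | tail _ hstep ih =>
    intro D' hle
    obtain ⟨E', hE', hle'⟩ := ih D' hle
    obtain ⟨F', hF', hle''⟩ := move_mono hstep hle'
    exact ⟨F', hE'.tail hF', hle''⟩

lemma reach_mono {D D' : V → ℕ} {t : V} (h : PebbleReachable G D t)
    (hle : ∀ w, D w ≤ D' w) : PebbleReachable G D' t := by
  obtain ⟨E, hE, ht⟩ := h
  obtain ⟨E', hE', hle'⟩ := rtg_mono hE D' hle
  exact ⟨E', hE', le_trans ht (hle' t)⟩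

end Mono

section Map
variable {V₁ V₂ : Type*} [DecidableEq V₁] [DecidableEq V₂]
  {G₁ : SimpleGraph V₁} {G₂ : SimpleGraph V₂}

lemma extend_update {φ : V₁ → V₂} (hinj : Function.Injective φ) (D : V₁ → ℕ) (u : V₁) (a : ℕ) :
    Function.extend φ (Function.update D u a) 0 =
      Function.update (Function.extend φ D 0) (φ u) a := by
  funext v
  by_cases hv : ∃ x, φ x = v
  · obtain ⟨x, rfl⟩ := hv
    by_cases hx : x = u
    · subst hx; simp [hinj.extend_apply]
    · rw [hinj.extend_apply, Function.update_apply, Function.update_apply,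
        if_neg hx, if_neg (fun h => hx (hinj h)), hinj.extend_apply]
  · rw [Function.update_apply, if_neg (fun h : v = φ u => hv ⟨u, h.symm⟩),
      Function.extend_apply' _ _ _ hv, Function.extend_apply' _ _ _ hv]

lemma move_map {φ : V₁ → V₂} (hinj : Function.Injective φ)
    (hadj : ∀ a b, G₁.Adj a b → G₂.Adj (φ a) (φ b)) {D E : V₁ → ℕ}
    (h : PebblingMove G₁ D E) :
    PebblingMove G₂ (Function.extend φ D 0) (Function.extend φ E 0) := by
  obtain ⟨u, v, huv, h2, rfl⟩ := h
  refine ⟨φ u, φ v, hadj _ _ huv, by rwa [hinj.extend_apply], ?_⟩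
  rw [extend_update hinj, extend_update hinj, hinj.extend_apply, hinj.extend_apply]

lemma rtg_map {φ : V₁ → V₂} (hinj : Function.Injective φ)
    (hadj : ∀ a b, G₁.Adj a b → G₂.Adj (φ a) (φ b)) {D E : V₁ → ℕ}
    (h : Relation.ReflTransGen (PebblingMove G₁) D E) :
    Relation.ReflTransGen (PebblingMove G₂)
      (Function.extend φ D 0) (Function.extend φ E 0) := by
  induction h with
  | refl => exact Relation.ReflTransGen.refl
  | tail _ hstep ih => exact ih.tail (move_map hinj hadj hstep)

lemma reach_map {φ : V₁ → V₂} (hinj : Function.Injective φ)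
    (hadj : ∀ a b, G₁.Adj a b → G₂.Adj (φ a) (φ b)) {D : V₁ → ℕ} {t : V₁}
    (h : PebbleReachable G₁ D t) :
    PebbleReachable G₂ (Function.extend φ D 0) (φ t) := by
  obtain ⟨E, hE, ht⟩ := h
  exact ⟨Function.extend φ E 0, rtg_map hinj hadj hE, by rwa [hinj.extend_apply]⟩

lemma sum_extend [Fintype V₁] [Fintype V₂] {φ : V₁ → V₂} (hinj : Function.Injective φ)
    (D : V₁ → ℕ) : ∑ v, Function.extend φ D 0 v = ∑ x, D x := by
  have h1 : ∑ v ∈ Finset.univ.image φ, Function.extend φ D 0 v = ∑ x, D x := by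
    rw [Finset.sum_image (fun x _ y _ h => hinj h)]
    simp [hinj.extend_apply]
  rw [← h1]
  refine (Finset.sum_subset (Finset.subset_univ _) ?_).symm
  intro v _ hv
  refine Function.extend_apply' _ _ _ ?_
  rintro ⟨x, hx⟩
  exact hv (Finset.mem_image.2 ⟨x, Finset.mem_univ x, hx⟩)

end Map

lemma piOpt_set_nonempty (n : ℕ) :
    {s : ℕ | ∃ D : Fin n × Fin n → ℕ, SolvableDistr (fgrid n n) D ∧ ∑ v, D v = s}.Nonempty := by
  refine ⟨∑ _v : Fin n × Fin n, 1, fun _ => 1, ?_, rfl⟩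
  intro t
  exact ⟨fun _ => 1, Relation.ReflTransGen.refl, le_refl 1⟩

lemma piOpt_spec (n : ℕ) :
    ∃ D : Fin n × Fin n → ℕ, SolvableDistr (fgrid n n) D ∧ ∑ v, D v = piOpt n :=
  Nat.sInf_mem (piOpt_set_nonempty n)

lemma piOpt_key {m n : ℕ} (hm : 1 ≤ m) (hmn : m ≤ n) :
    piOpt n ≤ (n / m + 1) ^ 2 * piOpt m := by
  obtain ⟨D, hD, hsum⟩ := piOpt_spec m
  set k := n / m + 1 with hk
  -- offsets
  have ho : ∀ a : Fin k, ∀ i : Fin m, min (a.1 * m) (n - m) + i.1 < n := by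
    intro a i
    have h1 : min (a.1 * m) (n - m) ≤ n - m := min_le_right _ _
    have h2 := i.2
    omega
  set φ : Fin k → Fin k → (Fin m × Fin m) → (Fin n × Fin n) :=
    fun a b p => (⟨min (a.1 * m) (n - m) + p.1.1, ho a p.1⟩,
                  ⟨min (b.1 * m) (n - m) + p.2.1, ho b p.2⟩) with hφ
  have hinj : ∀ a b, Function.Injective (φ a b) := by
    intro a b p q h
    simp only [hφ, Prod.ext_iff, Fin.ext_iff, Fin.mk.injEq] at h ⊢
    omega
  have hadj : ∀ a b, ∀ p q, (fgrid m m).Adj p q → (fgrid n n).Adj (φ a b p) (φ a b q) := by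
    intro a b p q h
    simp only [fgrid, hφ] at h ⊢
    omega
  set Dbig : Fin n × Fin n → ℕ :=
    fun v => ∑ a : Fin k, ∑ b : Fin k, Function.extend (φ a b) D 0 v with hDbig
  have hle : ∀ a b v, Function.extend (φ a b) D 0 v ≤ Dbig v := by
    intro a b v
    calc Function.extend (φ a b) D 0 v
        ≤ ∑ b' : Fin k, Function.extend (φ a b') D 0 v :=
          Finset.single_le_sum (f := fun b' => Function.extend (φ a b') D 0 v)
            (fun _ _ => Nat.zero_le _) (Finset.mem_univ b)
      _ ≤ Dbig v :=
          Finset.single_le_sum (f := fun a' => ∑ b' : Fin k, Function.extend (φ a' b') D 0 v)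
            (fun _ _ => Nat.zero_le _) (Finset.mem_univ a)
  have hsolv : SolvableDistr (fgrid n n) Dbig := by
    rintro ⟨⟨x, hx⟩, ⟨y, hy⟩⟩
    have hax : x / m < k := by
      have := Nat.div_le_div_right (c := m) (Nat.le_of_lt hx)
      omega
    have hay : y / m < k := by
      have := Nat.div_le_div_right (c := m) (Nat.le_of_lt hy)
      omega
    have hxd : x % m + x / m * m = x := Nat.mod_add_div' x m
    have hxm : x % m < m := Nat.mod_lt _ hm
    have hyd : y % m + y / m * m = y := Nat.mod_add_div' y m
    have hym : y % m < m := Nat.mod_lt _ hm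
    have hminx := min_choice ((x / m) * m) (n - m)
    have hminy := min_choice ((y / m) * m) (n - m)
    have hminx' : min ((x / m) * m) (n - m) ≤ (x / m) * m := min_le_left _ _
    have hminy' : min ((y / m) * m) (n - m) ≤ (y / m) * m := min_le_left _ _
    have hi : x - min ((x / m) * m) (n - m) < m := by
      rcases hminx with h | h <;> rw [h] <;> rw [h] at hminx' <;> omega
    have hj : y - min ((y / m) * m) (n - m) < m := by
      rcases hminy with h | h <;> rw [h] <;> rw [h] at hminy' <;> omega
    have ht : φ ⟨x / m, hax⟩ ⟨y / m, hay⟩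
        (⟨x - min ((x / m) * m) (n - m), hi⟩, ⟨y - min ((y / m) * m) (n - m), hj⟩)
        = (⟨x, hx⟩, ⟨y, hy⟩) := by
      simp only [hφ, Prod.ext_iff, Fin.ext_iff, Fin.mk.injEq]
      constructor
      · show min _ _ + (x - min ((x / m) * m) (n - m)) = x
        rcases hminx with h | h <;> rw [h] <;> rw [h] at hminx' <;> omega
      · show min _ _ + (y - min ((y / m) * m) (n - m)) = y
        rcases hminy with h | h <;> rw [h] <;> rw [h] at hminy' <;> omega
    have hr := reach_map (hinj ⟨x / m, hax⟩ ⟨y / m, hay⟩) (hadj _ _)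
      (hD (⟨x - min ((x / m) * m) (n - m), hi⟩, ⟨y - min ((y / m) * m) (n - m), hj⟩))
    rw [ht] at hr
    exact reach_mono hr (hle _ _)
  have hone : ∀ a b, ∑ v, Function.extend (φ a b) D 0 v = piOpt m := by
    intro a b; rw [sum_extend (hinj a b), hsum]
  have hsumbig : ∑ v, Dbig v = k ^ 2 * piOpt m := by
    simp only [hDbig]
    rw [Finset.sum_comm]
    rw [Finset.sum_congr rfl (fun (a : Fin k) (_ : a ∈ Finset.univ) => Finset.sum_comm)]
    simp only [hone]
    simp [Finset.sum_const, Finset.card_univ]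
    ring
  refine le_trans (Nat.sInf_le ⟨Dbig, hsolv, rfl⟩) ?_
  rw [hsumbig]

set_option maxHeartbeats 1000000 in
/-- The sequence `π_opt(G_{n×n}) / n²` converges. -/
theorem piOpt_div_sq_converges :
    ∃ L : ℝ, Filter.Tendsto (fun n : ℕ => (piOpt n : ℝ) / (n : ℝ) ^ 2)
      Filter.atTop (nhds L) := by
  set a : ℕ → ℝ := fun n => (piOpt n : ℝ) / (n : ℝ) ^ 2 with ha
  have ha_nonneg : ∀ n, 0 ≤ a n := fun n => by positivity
  have hbdd : BddBelow (Set.range fun m : ℕ => a (m + 1)) :=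
    ⟨0, by rintro _ ⟨m, rfl⟩; exact ha_nonneg _⟩
  set L := ⨅ m : ℕ, a (m + 1) with hL
  have hL0 : 0 ≤ L := le_ciInf fun m => ha_nonneg _
  have hLle : ∀ n : ℕ, 1 ≤ n → L ≤ a n := by
    intro n hn
    have h := ciInf_le hbdd (n - 1)
    rwa [Nat.sub_add_cancel hn] at h
  refine ⟨L, ?_⟩
  rw [Metric.tendsto_atTop]
  intro ε hε
  obtain ⟨m, hm⟩ := exists_lt_of_ciInf_lt (show L < L + ε / 2 by linarith)
  set M := m + 1 with hM
  have hM1 : 1 ≤ M := Nat.le_add_left 1 m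
  have hMpos : (0:ℝ) < M := by exact_mod_cast hM1
  obtain ⟨N0, hN0⟩ := exists_nat_gt (6 * (M:ℝ) * (L + ε) / ε)
  refine ⟨max N0 M, fun n hn => ?_⟩
  have hnM : M ≤ n := le_trans (le_max_right _ _) hn
  have hnN0 : N0 ≤ n := le_trans (le_max_left _ _) hn
  have hn1 : 1 ≤ n := le_trans hM1 hnM
  have hnpos : (0:ℝ) < n := by exact_mod_cast hn1
  have hnMr : (M:ℝ) ≤ n := by exact_mod_cast hnM
  have hn6 : 6 * (M:ℝ) * (L + ε) < n * ε := by
    have h1 : 6 * (M:ℝ) * (L + ε) / ε < n := lt_of_lt_of_le hN0 (by exact_mod_cast hnN0)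
    rw [div_lt_iff₀ hε] at h1
    linarith
  have key := piOpt_key hM1 hnM
  have c1 : (piOpt n : ℝ) ≤ (((n / M : ℕ) : ℝ) + 1) ^ 2 * piOpt M := by
    exact_mod_cast key
  have c2 : (((n / M : ℕ) : ℝ) + 1) ≤ ((n:ℝ) + M) / M := by
    have h := Nat.cast_div_le (α := ℝ) (m := n) (n := M)
    have h2 : ((n:ℝ) + M) / M = (n:ℝ) / M + 1 := by field_simp
    rw [h2]
    linarith
  have e1 : a n ≤ a M * (((n:ℝ) + M) / (n:ℝ)) ^ 2 := by
    have h3 : a M * (((n:ℝ) + M) / (n:ℝ)) ^ 2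
        = ((piOpt M : ℝ) * (((n:ℝ) + M) / M) ^ 2) / (n:ℝ) ^ 2 := by
      simp only [ha]
      field_simp
    rw [h3]
    calc a n = (piOpt n : ℝ) / (n:ℝ) ^ 2 := rfl
      _ ≤ ((((n / M : ℕ) : ℝ) + 1) ^ 2 * (piOpt M : ℝ)) / (n:ℝ) ^ 2 := by gcongr
      _ ≤ ((piOpt M : ℝ) * (((n:ℝ) + M) / M) ^ 2) / (n:ℝ) ^ 2 := by
          rw [mul_comm]
          gcongr
  have e2 : a n ≤ (L + ε / 2) * (((n:ℝ) + M) / (n:ℝ)) ^ 2 :=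
    le_trans e1 (mul_le_mul_of_nonneg_right hm.le (by positivity))
  have e3 : (L + ε / 2) * (((n:ℝ) + M) / (n:ℝ)) ^ 2 < L + ε := by
    have h2 : (L + ε / 2) * (((n:ℝ) + M) / (n:ℝ)) ^ 2
        = ((L + ε / 2) * ((n:ℝ) + M) ^ 2) / (n:ℝ) ^ 2 := by
      field_simp
    rw [h2, div_lt_iff₀ (by positivity)]
    nlinarith [mul_lt_mul_of_pos_left hn6 hnpos,
      mul_nonneg (mul_nonneg hMpos.le (sub_nonneg.2 hnMr)) (by linarith : (0:ℝ) ≤ L + ε / 2),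
      mul_nonneg (mul_nonneg hMpos.le hnpos.le) hε.le]
  have hLa := hLle n hn1
  have h4 : a n < L + ε := lt_of_le_of_lt e2 e3
  rw [Real.dist_eq, abs_lt]
  exact ⟨by linarith, by linarith⟩
end

section
/- For all m, n with n ≥ m ≥ 1, writing n = km + r with 0 ≤ r < m, we have π_opt(G_{n×n}) ≤ k²·π_opt(G_{m×m}) + r² + 2rkm. -/
/-- Simulation: an injective graph homomorphism transports pebbling sequences,
even in the presence of extra pebbles. -/
lemma pebbling_simulate {V W : Type*} [DecidableEq V] [DecidableEq W]
    {G : SimpleGraph V} {H : SimpleGraph W}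
    (f : V → W) (hf : Function.Injective f)
    (hadj : ∀ u v, G.Adj u v → H.Adj (f u) (f v))
    {D D' : V → ℕ} (h : Relation.ReflTransGen (PebblingMove G) D D') :
    ∀ E : W → ℕ, (∀ x, D x ≤ E (f x)) →
      ∃ E', Relation.ReflTransGen (PebblingMove H) E E' ∧ ∀ x, D' x ≤ E' (f x) := by
  induction h with
  | refl => exact fun E hE => ⟨E, .refl, hE⟩
  | @tail b c _ step ih =>
    intro E hE
    obtain ⟨E', hE', hinv⟩ := ih E hE
    obtain ⟨u, v, huv, h2, rfl⟩ := step
    have hne : u ≠ v := G.ne_of_adj huv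
    refine ⟨Function.update (Function.update E' (f u) (E' (f u) - 2)) (f v) (E' (f v) + 1),
      hE'.tail ⟨f u, f v, hadj u v huv, le_trans h2 (hinv u), rfl⟩, ?_⟩
    intro x
    by_cases hxv : x = v
    · subst hxv
      simp only [Function.update_self]
      exact Nat.add_le_add_right (hinv x) 1
    · rw [Function.update_of_ne hxv, Function.update_of_ne (fun hc => hxv (hf hc))]
      by_cases hxu : x = u
      · subst hxu
        rw [Function.update_self, Function.update_self]
        exact Nat.sub_le_sub_right (hinv x) 2
      · rw [Function.update_of_ne hxu, Function.update_of_ne (fun hc => hxu (hf hc))]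
        exact hinv x

/-- Summing a function of `i % m` over `range (k * m)`. -/
lemma sum_range_mod (g : ℕ → ℕ) (k m : ℕ) :
    ∑ i ∈ Finset.range (k * m), g (i % m) = k * ∑ i ∈ Finset.range m, g i := by
  induction k with
  | zero => simp
  | succ k ih =>
    have h1 : (k + 1) * m = k * m + m := by ring
    rw [h1, Finset.range_eq_Ico,
      ← Finset.sum_Ico_consecutive _ (Nat.zero_le (k * m)) (Nat.le_add_right (k * m) m),
      ← Finset.range_eq_Ico, ih, Finset.sum_Ico_eq_sum_range]
    have h2 : ∀ i ∈ Finset.range (k * m + m - k * m), g ((k * m + i) % m) = g i := by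
      intro i hi
      simp only [Finset.mem_range] at hi
      rw [Nat.add_comm (k * m) i, Nat.add_mul_mod_self_right,
        Nat.mod_eq_of_lt (by omega)]
    have h3 : k * m + m - k * m = m := by omega
    rw [Finset.sum_congr rfl h2, h3]
    ring

/-- Embedding of an `m × m` block at offset `(m·a, m·b)` into the `n × n` grid. -/
def blockEmb (m n a b : ℕ) (ha : m * a + m ≤ n) (hb : m * b + m ≤ n) :
    Fin m × Fin m → Fin n × Fin n :=
  fun p => (⟨m * a + p.1.val, by have := p.1.isLt; omega⟩,
            ⟨m * b + p.2.val, by have := p.2.isLt; omega⟩)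

lemma blockEmb_inj (m n a b : ℕ) (ha : m * a + m ≤ n) (hb : m * b + m ≤ n) :
    Function.Injective (blockEmb m n a b ha hb) := by
  intro p q h
  simp only [blockEmb, Prod.mk.injEq, Fin.mk.injEq] at h
  exact Prod.ext (Fin.ext (by omega)) (Fin.ext (by omega))

lemma blockEmb_adj (m n a b : ℕ) (ha : m * a + m ≤ n) (hb : m * b + m ≤ n) :
    ∀ u v, (fgrid m m).Adj u v →
      (fgrid n n).Adj (blockEmb m n a b ha hb u) (blockEmb m n a b ha hb v) := by
  intro u v huv
  simp only [fgrid, blockEmb] at huv ⊢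
  push_cast at huv ⊢
  omega

/-- Tiling bound: if `n = k·m + r` with `0 ≤ r < m`, then
`π_opt(G_{n×n}) ≤ k²·π_opt(G_{m×m}) + r² + 2rkm`. -/
theorem piOpt_tiling_bound (m n k r : ℕ) (hm : 1 ≤ m) (hmn : m ≤ n)
    (hn : n = k * m + r) (hr : r < m) :
    piOpt n ≤ k ^ 2 * piOpt m + r ^ 2 + 2 * r * k * m := by
  -- An optimal distribution on the m×m grid exists.
  have hne : {s : ℕ | ∃ D : Fin m × Fin m → ℕ,
      SolvableDistr (fgrid m m) D ∧ ∑ v, D v = s}.Nonempty := by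
    exact ⟨∑ v : Fin m × Fin m, (1 : ℕ), fun _ => 1,
      fun t => ⟨fun _ => 1, Relation.ReflTransGen.refl, le_refl 1⟩, rfl⟩
  obtain ⟨Dm, hDm, hDmsum₀⟩ := Nat.sInf_mem hne
  have hDmsum : ∑ v, Dm v = piOpt m := hDmsum₀
  clear hDmsum₀
  obtain ⟨c, hc⟩ : ∃ c, c = k * m := ⟨_, rfl⟩
  have hcn : c ≤ n := by omega
  -- the tiled distribution, as a function on ℕ × ℕ
  obtain ⟨g, hg⟩ : ∃ g : ℕ → ℕ → ℕ, g = fun x y =>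
    if hx : x < m then if hy : y < m then Dm (⟨x, hx⟩, ⟨y, hy⟩) else 0 else 0 := ⟨_, rfl⟩
  obtain ⟨F, hF⟩ : ∃ F : ℕ → ℕ → ℕ,
    F = fun i j => if i < c ∧ j < c then g (i % m) (j % m) else 1 := ⟨_, rfl⟩
  obtain ⟨Dn, hDn⟩ : ∃ Dn : Fin n × Fin n → ℕ, Dn = fun p => F p.1 p.2 := ⟨_, rfl⟩
  -- solvability
  have hsolv : SolvableDistr (fgrid n n) Dn := by
    intro t
    obtain ⟨⟨i, hi⟩, ⟨j, hj⟩⟩ := t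
    by_cases hb : i < c ∧ j < c
    · -- block containing (i, j)
      have ha : i / m < k := Nat.div_lt_iff_lt_mul hm |>.mpr (by omega)
      have hbm : j / m < k := Nat.div_lt_iff_lt_mul hm |>.mpr (by omega)
      have hun : ∀ a : ℕ, a < k → m * a + m ≤ c := by
        intro a hak
        have h1 : m * (a + 1) ≤ m * k := Nat.mul_le_mul_left m (by omega)
        have h2 : m * (a + 1) = m * a + m := by ring
        have h3 : m * k = c := by rw [hc]; ring
        omega
      have hai : m * (i / m) + m ≤ n := le_trans (hun _ ha) hcn
      have haj : m * (j / m) + m ≤ n := le_trans (hun _ hbm) hcn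
      obtain ⟨φ, hφ⟩ : ∃ φ, φ = blockEmb m n (i / m) (j / m) hai haj := ⟨_, rfl⟩
      have hinj : Function.Injective φ := by
        rw [hφ]; exact blockEmb_inj m n _ _ hai haj
      have hadj : ∀ u v, (fgrid m m).Adj u v → (fgrid n n).Adj (φ u) (φ v) := by
        rw [hφ]; exact blockEmb_adj m n _ _ hai haj
      have hDnφ : ∀ p, Dm p = Dn (φ p) := by
        intro p
        obtain ⟨⟨x, hx⟩, ⟨y, hy⟩⟩ := p
        have h1 : m * (i / m) + x < c := by have := hun _ ha; omega
        have h2 : m * (j / m) + y < c := by have := hun _ hbm; omega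
        simp only [hDn, hφ, blockEmb, hF]
        rw [if_pos ⟨h1, h2⟩, Nat.mul_add_mod, Nat.mul_add_mod,
          Nat.mod_eq_of_lt hx, Nat.mod_eq_of_lt hy, hg]
        simp only [dif_pos hx, dif_pos hy]
      -- the target inside the block
      have hxm : i % m < m := Nat.mod_lt _ hm
      have hym : j % m < m := Nat.mod_lt _ hm
      obtain ⟨D', hchain, hD'⟩ := hDm (⟨i % m, hxm⟩, ⟨j % m, hym⟩)
      obtain ⟨E', hE', hinv⟩ := pebbling_simulate φ hinj hadj hchain Dn
        (fun x => le_of_eq (hDnφ x))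
      refine ⟨E', hE', ?_⟩
      have hφt : φ (⟨i % m, hxm⟩, ⟨j % m, hym⟩) = (⟨i, hi⟩, ⟨j, hj⟩) := by
        simp only [hφ, blockEmb, Prod.mk.injEq, Fin.mk.injEq]
        exact ⟨Nat.div_add_mod i m, Nat.div_add_mod j m⟩
      calc 1 ≤ D' (⟨i % m, hxm⟩, ⟨j % m, hym⟩) := hD'
        _ ≤ E' (φ (⟨i % m, hxm⟩, ⟨j % m, hym⟩)) := hinv _
        _ = E' (⟨i, hi⟩, ⟨j, hj⟩) := by rw [hφt]
    · refine ⟨Dn, .refl, ?_⟩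
      simp only [hDn, hF, if_neg hb]
      exact le_refl 1
  -- sum computation
  have hsum : ∑ v, Dn v = k ^ 2 * piOpt m + r ^ 2 + 2 * r * k * m := by
    have hS : ∑ x ∈ Finset.range m, ∑ y ∈ Finset.range m, g x y = piOpt m := by
      rw [← hDmsum, Fintype.sum_prod_type,
        ← Fin.sum_univ_eq_sum_range (fun x => ∑ y ∈ Finset.range m, g x y) m]
      refine Finset.sum_congr rfl fun x _ => ?_
      rw [← Fin.sum_univ_eq_sum_range (fun y => g x y) m]
      refine Finset.sum_congr rfl fun y _ => ?_
      simp only [hg, dif_pos x.isLt, dif_pos y.isLt, Fin.eta]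
    have h1 : ∑ v, Dn v = ∑ i ∈ Finset.range n, ∑ j ∈ Finset.range n, F i j := by
      rw [Fintype.sum_prod_type,
        ← Fin.sum_univ_eq_sum_range (fun i => ∑ j ∈ Finset.range n, F i j) n]
      refine Finset.sum_congr rfl fun i _ => ?_
      rw [← Fin.sum_univ_eq_sum_range (fun j => F i j) n]
      simp only [hDn]
    have hrowhi : ∀ i, c ≤ i → ∑ j ∈ Finset.range n, F i j = n := by
      intro i hic
      have h2 : ∀ j ∈ Finset.range n, F i j = 1 := by
        intro j _
        simp only [hF]
        exact if_neg (by omega)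
      rw [Finset.sum_congr rfl h2]
      simp
    have hrowlo : ∀ i < c,
        ∑ j ∈ Finset.range n, F i j = (k * ∑ y ∈ Finset.range m, g (i % m) y) + r := by
      intro i hic
      rw [Finset.range_eq_Ico,
        ← Finset.sum_Ico_consecutive _ (Nat.zero_le c) hcn, ← Finset.range_eq_Ico]
      congr 1
      · have h2 : ∀ j ∈ Finset.range c, F i j = g (i % m) (j % m) := by
          intro j hj
          simp only [hF]
          exact if_pos ⟨hic, Finset.mem_range.mp hj⟩
        rw [Finset.sum_congr rfl h2, hc, sum_range_mod (fun y => g (i % m) y) k m]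
      · have h2 : ∀ j ∈ Finset.Ico c n, F i j = 1 := by
          intro j hj
          have := (Finset.mem_Ico.mp hj).1
          simp only [hF]
          exact if_neg (by omega)
        rw [Finset.sum_congr rfl h2]
        simp only [Finset.sum_const, Nat.card_Ico, smul_eq_mul, mul_one]
        omega
    rw [h1, Finset.range_eq_Ico,
      ← Finset.sum_Ico_consecutive _ (Nat.zero_le c) hcn, ← Finset.range_eq_Ico, ← Finset.range_eq_Ico]
    have h2 : ∑ i ∈ Finset.Ico c n, ∑ j ∈ Finset.range n, F i j = r * n := by
      rw [Finset.sum_congr rfl (fun i hi => hrowhi i (Finset.mem_Ico.mp hi).1),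
        Finset.sum_const, Nat.card_Ico, smul_eq_mul]
      congr 1
      omega
    have h3 : ∑ i ∈ Finset.range c, ∑ j ∈ Finset.range n, F i j
        = k * (k * piOpt m) + c * r := by
      rw [Finset.sum_congr rfl (fun i hi => hrowlo i (Finset.mem_range.mp hi)),
        Finset.sum_add_distrib, Finset.sum_const, Finset.card_range, smul_eq_mul,
        ← Finset.mul_sum, hc, sum_range_mod (fun x => ∑ y ∈ Finset.range m, g x y) k m, hS]
    rw [h2, h3, hc, hn]
    ring
  calc piOpt n ≤ ∑ v, Dn v := Nat.sInf_le ⟨Dn, hsolv, rfl⟩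
    _ = _ := hsum
end

section
/- There is no constant bound of 3.25 on covering ratios of solvable grid distributions: for every ε > 0 there exists n and a solvable pebble distribution D on G_{n×n} with n²/|D| > 3.5 − ε; in particular the covering ratio can exceed 3.25. -/
section Lemmas

variable {V : Type*} [DecidableEq V] {G : SimpleGraph V} {D D1 D2 : V → ℕ}

/-- `k` pebbles can be placed on `t`. -/
abbrev CanPl (G : SimpleGraph V) (D : V → ℕ) (k : ℕ) (t : V) : Prop :=
  ∃ D', Relation.ReflTransGen (PebblingMove G) D D' ∧ k ≤ D' t

theorem canPl_of {k : ℕ} {t : V} (h : k ≤ D t) : CanPl G D k t := ⟨D, .refl, h⟩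

theorem canPl_self (D : V → ℕ) (t : V) : CanPl G D (D t) t := ⟨D, .refl, le_rfl⟩

theorem move_add {D D' : V → ℕ} (h : PebblingMove G D D') (C : V → ℕ) :
    PebblingMove G (D + C) (D' + C) := by
  obtain ⟨u, v, adj, hu, rfl⟩ := h
  refine ⟨u, v, adj, ?_, ?_⟩
  · have h1 : (D + C) u = D u + C u := rfl
    omega
  · have hne : u ≠ v := adj.ne
    funext w
    by_cases h1 : w = v
    · subst h1
      simp only [Pi.add_apply, Function.update_self]
      omega
    · by_cases h2 : w = u
      · subst h2
        simp only [Pi.add_apply, Function.update_of_ne h1, Function.update_self]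
        omega
      · simp only [Pi.add_apply, Function.update_of_ne h1, Function.update_of_ne h2]

theorem rtg_add {D E : V → ℕ} (h : Relation.ReflTransGen (PebblingMove G) D E) (C : V → ℕ) :
    Relation.ReflTransGen (PebblingMove G) (D + C) (E + C) := by
  induction h with
  | refl => exact .refl
  | tail _ h2 ih => exact ih.tail (move_add h2 C)

theorem canPl_add {k1 k2 : ℕ} {t : V} (h1 : CanPl G D1 k1 t) (h2 : CanPl G D2 k2 t) :
    CanPl G (D1 + D2) (k1 + k2) t := by
  obtain ⟨E1, s1, c1⟩ := h1
  obtain ⟨E2, s2, c2⟩ := h2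
  have t1 := rtg_add s1 D2
  have t2 := rtg_add s2 E1
  rw [add_comm D2 E1, add_comm E2 E1] at t2
  refine ⟨E1 + E2, t1.trans t2, ?_⟩
  have h3 : (E1 + E2) t = E1 t + E2 t := rfl
  omega

theorem canPl_mono {k k' : ℕ} {t : V} (hD : ∀ v, D1 v ≤ D2 v) (hk : k' ≤ k)
    (h : CanPl G D1 k t) : CanPl G D2 k' t := by
  obtain ⟨E, s, c⟩ := h
  have t1 := rtg_add s (fun v => D2 v - D1 v)
  have he : D1 + (fun v => D2 v - D1 v) = D2 := by
    funext v
    have := hD v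
    show D1 v + (D2 v - D1 v) = D2 v
    omega
  rw [he] at t1
  refine ⟨_, t1, ?_⟩
  have h3 : (E + fun v => D2 v - D1 v) t = E t + (D2 t - D1 t) := rfl
  omega

theorem canPl_step {u t : V} {m k : ℕ} (adj : G.Adj u t) (h : CanPl G D m u) (hm : 2*k ≤ m) :
    CanPl G D k t := by
  obtain ⟨E, s, c⟩ := h
  have hut : u ≠ t := adj.ne
  have aux : ∀ (j : ℕ) (F : V → ℕ), 2*j ≤ F u →
      ∃ F', Relation.ReflTransGen (PebblingMove G) F F' ∧ F t + j ≤ F' t := by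
    intro j
    induction j with
    | zero => exact fun F _ => ⟨F, .refl, by omega⟩
    | succ i ih =>
      intro F hF
      set F1 := Function.update (Function.update F u (F u - 2)) t (F t + 1) with hF1
      have hmv : PebblingMove G F F1 := ⟨u, t, adj, by omega, hF1⟩
      have h1 : F1 u = F u - 2 := by
        rw [hF1, Function.update_of_ne hut, Function.update_self]
      have h2 : F1 t = F t + 1 := by rw [hF1, Function.update_self]
      obtain ⟨F', s', c'⟩ := ih F1 (by omega)
      exact ⟨F', Relation.ReflTransGen.head hmv s', by omega⟩
  obtain ⟨F', s', c'⟩ := aux k E (by omega)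
  exact ⟨F', s.trans s', by omega⟩

theorem canPl_d1 {p t : V} (adj : G.Adj p t) (h : 2 ≤ D p) : CanPl G D 1 t :=
  canPl_step adj (canPl_self D p) (by omega)

theorem canPl_d2 {p q t : V} (a1 : G.Adj p q) (a2 : G.Adj q t) (h : 4 ≤ D p) : CanPl G D 1 t :=
  canPl_step a2 (canPl_step (k := 2) a1 (canPl_self D p) (by omega)) (by omega)

/-- Four pebbles concentrated at `p`. -/
def unit (p : V) : V → ℕ := fun v => if v = p then 4 else 0

theorem canPl_merge {p1 a1 p2 a2 m t : V} (hne : p1 ≠ p2)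
    (h11 : G.Adj p1 a1) (h12 : G.Adj a1 m) (h21 : G.Adj p2 a2) (h22 : G.Adj a2 m)
    (hmt : G.Adj m t) (hp1 : 4 ≤ D p1) (hp2 : 4 ≤ D p2) : CanPl G D 1 t := by
  have c1 : CanPl G (unit p1) 1 m := canPl_d2 h11 h12 (by simp [unit])
  have c2 : CanPl G (unit p2) 1 m := canPl_d2 h21 h22 (by simp [unit])
  have c12 := canPl_add c1 c2
  refine canPl_step hmt (canPl_mono (D1 := unit p1 + unit p2) ?_ (le_refl (1+1)) c12) (by omega)
  intro v
  show (if v = p1 then 4 else 0) + (if v = p2 then 4 else 0) ≤ D v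
  by_cases e1 : v = p1
  · subst e1; rw [if_pos rfl, if_neg hne]; omega
  · rw [if_neg e1]
    by_cases e2 : v = p2
    · subst e2; rw [if_pos rfl]; omega
    · rw [if_neg e2]; omega

end Lemmas

theorem fgrid_adj (n : ℕ) (x1 y1 x2 y2 : ℕ) (h1 : x1 < n) (h2 : y1 < n) (h3 : x2 < n)
    (h4 : y2 < n)
    (h : (x1 = x2 + 1 ∨ x2 = x1 + 1) ∧ y1 = y2 ∨ x1 = x2 ∧ (y1 = y2 + 1 ∨ y2 = y1 + 1)) :
    (fgrid n n).Adj (⟨x1, h1⟩, ⟨y1, h2⟩) (⟨x2, h3⟩, ⟨y2, h4⟩) := by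
  show ((x1 : ℤ) - (x2 : ℤ)).natAbs + ((y1 : ℤ) - (y2 : ℤ)).natAbs = 1
  omega

/-- The distribution: 2 pebbles on a width-3 boundary frame, and 4 pebbles on the
lattice `6x + y ≡ 0 (mod 14)`. -/
def Dd (n : ℕ) : Fin n × Fin n → ℕ := fun v =>
  (if (v.1 : ℕ) < 3 ∨ (v.2 : ℕ) < 3 ∨ n - 3 ≤ (v.1 : ℕ) ∨ n - 3 ≤ (v.2 : ℕ) then 2 else 0) +
  (if (6 * (v.1 : ℕ) + (v.2 : ℕ)) % 14 = 0 then 4 else 0)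

theorem Dd_frame (n x y : ℕ) (hx : x < n) (hy : y < n)
    (h : x < 3 ∨ y < 3 ∨ n - 3 ≤ x ∨ n - 3 ≤ y) : 2 ≤ Dd n (⟨x, hx⟩, ⟨y, hy⟩) := by
  show 2 ≤ (if x < 3 ∨ y < 3 ∨ n - 3 ≤ x ∨ n - 3 ≤ y then 2 else 0) +
    (if (6 * x + y) % 14 = 0 then 4 else 0)
  rw [if_pos h]
  exact Nat.le_add_right _ _

theorem Dd_lat (n x y : ℕ) (hx : x < n) (hy : y < n) (h : (6 * x + y) % 14 = 0) :
    4 ≤ Dd n (⟨x, hx⟩, ⟨y, hy⟩) := by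
  show 4 ≤ (if x < 3 ∨ y < 3 ∨ n - 3 ≤ x ∨ n - 3 ≤ y then 2 else 0) +
    (if (6 * x + y) % 14 = 0 then 4 else 0)
  rw [if_pos h]
  exact Nat.le_add_left _ _

theorem interiorReach {n : ℕ} (D : Fin n × Fin n → ℕ) (a b : ℕ) (ha : a + 6 < n) (hb : b + 6 < n)
    (hD : ∀ i j (hin : a + i < n) (hjn : b + j < n), (6*(a+i)+(b+j)) % 14 = 0 →
      4 ≤ D (⟨a+i, hin⟩, ⟨b+j, hjn⟩)) :
    CanPl (fgrid n n) D 1 ((⟨a+3, by omega⟩ : Fin n), (⟨b+3, by omega⟩ : Fin n)) := by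
  rcases (show (6*(a+3)+(b+3)) % 14 = 0 ∨ (6*(a+3)+(b+3)) % 14 = 1 ∨ (6*(a+3)+(b+3)) % 14 = 2 ∨ (6*(a+3)+(b+3)) % 14 = 3 ∨ (6*(a+3)+(b+3)) % 14 = 4 ∨ (6*(a+3)+(b+3)) % 14 = 5 ∨ (6*(a+3)+(b+3)) % 14 = 6 ∨ (6*(a+3)+(b+3)) % 14 = 7 ∨ (6*(a+3)+(b+3)) % 14 = 8 ∨ (6*(a+3)+(b+3)) % 14 = 9 ∨ (6*(a+3)+(b+3)) % 14 = 10 ∨ (6*(a+3)+(b+3)) % 14 = 11 ∨ (6*(a+3)+(b+3)) % 14 = 12 ∨ (6*(a+3)+(b+3)) % 14 = 13 by omega) with h|h|h|h|h|h|h|h|h|h|h|h|h|h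
  · exact canPl_of (le_trans (by norm_num) (hD 3 3 (by omega) (by omega) (by omega)))
  · exact canPl_merge
      (by intro hE; rw [Prod.mk.injEq, Fin.mk.injEq, Fin.mk.injEq] at hE; omega)
      (fgrid_adj n (a+5) (b+4) (a+5) (b+3) (by omega) (by omega) (by omega) (by omega) (by omega))
      (fgrid_adj n (a+5) (b+3) (a+4) (b+3) (by omega) (by omega) (by omega) (by omega) (by omega))
      (fgrid_adj n (a+3) (b+2) (a+4) (b+2) (by omega) (by omega) (by omega) (by omega) (by omega))
      (fgrid_adj n (a+4) (b+2) (a+4) (b+3) (by omega) (by omega) (by omega) (by omega) (by omega))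
      (fgrid_adj n (a+4) (b+3) (a+3) (b+3) (by omega) (by omega) (by omega) (by omega) (by omega))
      (hD 5 4 (by omega) (by omega) (by omega))
      (hD 3 2 (by omega) (by omega) (by omega))
  · exact canPl_d2 (fgrid_adj n (a+5) (b+3) (a+4) (b+3) (by omega) (by omega) (by omega) (by omega) (by omega))
      (fgrid_adj n (a+4) (b+3) (a+3) (b+3) (by omega) (by omega) (by omega) (by omega) (by omega))
      (hD 5 3 (by omega) (by omega) (by omega))
  · exact canPl_merge
      (by intro hE; rw [Prod.mk.injEq, Fin.mk.injEq, Fin.mk.injEq] at hE; omega)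
      (fgrid_adj n (a+5) (b+2) (a+4) (b+2) (by omega) (by omega) (by omega) (by omega) (by omega))
      (fgrid_adj n (a+4) (b+2) (a+3) (b+2) (by omega) (by omega) (by omega) (by omega) (by omega))
      (fgrid_adj n (a+3) (b+0) (a+3) (b+1) (by omega) (by omega) (by omega) (by omega) (by omega))
      (fgrid_adj n (a+3) (b+1) (a+3) (b+2) (by omega) (by omega) (by omega) (by omega) (by omega))
      (fgrid_adj n (a+3) (b+2) (a+3) (b+3) (by omega) (by omega) (by omega) (by omega) (by omega))
      (hD 5 2 (by omega) (by omega) (by omega))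
      (hD 3 0 (by omega) (by omega) (by omega))
  · exact canPl_merge
      (by intro hE; rw [Prod.mk.injEq, Fin.mk.injEq, Fin.mk.injEq] at hE; omega)
      (fgrid_adj n (a+0) (b+3) (a+1) (b+3) (by omega) (by omega) (by omega) (by omega) (by omega))
      (fgrid_adj n (a+1) (b+3) (a+2) (b+3) (by omega) (by omega) (by omega) (by omega) (by omega))
      (fgrid_adj n (a+2) (b+5) (a+2) (b+4) (by omega) (by omega) (by omega) (by omega) (by omega))
      (fgrid_adj n (a+2) (b+4) (a+2) (b+3) (by omega) (by omega) (by omega) (by omega) (by omega))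
      (fgrid_adj n (a+2) (b+3) (a+3) (b+3) (by omega) (by omega) (by omega) (by omega) (by omega))
      (hD 0 3 (by omega) (by omega) (by omega))
      (hD 2 5 (by omega) (by omega) (by omega))
  · exact canPl_d2 (fgrid_adj n (a+2) (b+4) (a+2) (b+3) (by omega) (by omega) (by omega) (by omega) (by omega))
      (fgrid_adj n (a+2) (b+3) (a+3) (b+3) (by omega) (by omega) (by omega) (by omega) (by omega))
      (hD 2 4 (by omega) (by omega) (by omega))
  · exact canPl_d1 (fgrid_adj n (a+2) (b+3) (a+3) (b+3) (by omega) (by omega) (by omega) (by omega) (by omega))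
      (le_trans (by norm_num) (hD 2 3 (by omega) (by omega) (by omega)))
  · exact canPl_d2 (fgrid_adj n (a+4) (b+4) (a+4) (b+3) (by omega) (by omega) (by omega) (by omega) (by omega))
      (fgrid_adj n (a+4) (b+3) (a+3) (b+3) (by omega) (by omega) (by omega) (by omega) (by omega))
      (hD 4 4 (by omega) (by omega) (by omega))
  · exact canPl_d1 (fgrid_adj n (a+4) (b+3) (a+3) (b+3) (by omega) (by omega) (by omega) (by omega) (by omega))
      (le_trans (by norm_num) (hD 4 3 (by omega) (by omega) (by omega)))
  · exact canPl_d2 (fgrid_adj n (a+4) (b+2) (a+4) (b+3) (by omega) (by omega) (by omega) (by omega) (by omega))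
      (fgrid_adj n (a+4) (b+3) (a+3) (b+3) (by omega) (by omega) (by omega) (by omega) (by omega))
      (hD 4 2 (by omega) (by omega) (by omega))
  · exact canPl_merge
      (by intro hE; rw [Prod.mk.injEq, Fin.mk.injEq, Fin.mk.injEq] at hE; omega)
      (fgrid_adj n (a+6) (b+3) (a+5) (b+3) (by omega) (by omega) (by omega) (by omega) (by omega))
      (fgrid_adj n (a+5) (b+3) (a+4) (b+3) (by omega) (by omega) (by omega) (by omega) (by omega))
      (fgrid_adj n (a+4) (b+1) (a+4) (b+2) (by omega) (by omega) (by omega) (by omega) (by omega))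
      (fgrid_adj n (a+4) (b+2) (a+4) (b+3) (by omega) (by omega) (by omega) (by omega) (by omega))
      (fgrid_adj n (a+4) (b+3) (a+3) (b+3) (by omega) (by omega) (by omega) (by omega) (by omega))
      (hD 6 3 (by omega) (by omega) (by omega))
      (hD 4 1 (by omega) (by omega) (by omega))
  · exact canPl_merge
      (by intro hE; rw [Prod.mk.injEq, Fin.mk.injEq, Fin.mk.injEq] at hE; omega)
      (fgrid_adj n (a+1) (b+4) (a+2) (b+4) (by omega) (by omega) (by omega) (by omega) (by omega))
      (fgrid_adj n (a+2) (b+4) (a+3) (b+4) (by omega) (by omega) (by omega) (by omega) (by omega))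
      (fgrid_adj n (a+3) (b+6) (a+3) (b+5) (by omega) (by omega) (by omega) (by omega) (by omega))
      (fgrid_adj n (a+3) (b+5) (a+3) (b+4) (by omega) (by omega) (by omega) (by omega) (by omega))
      (fgrid_adj n (a+3) (b+4) (a+3) (b+3) (by omega) (by omega) (by omega) (by omega) (by omega))
      (hD 1 4 (by omega) (by omega) (by omega))
      (hD 3 6 (by omega) (by omega) (by omega))
  · exact canPl_d2 (fgrid_adj n (a+1) (b+3) (a+2) (b+3) (by omega) (by omega) (by omega) (by omega) (by omega))
      (fgrid_adj n (a+2) (b+3) (a+3) (b+3) (by omega) (by omega) (by omega) (by omega) (by omega))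
      (hD 1 3 (by omega) (by omega) (by omega))
  · exact canPl_merge
      (by intro hE; rw [Prod.mk.injEq, Fin.mk.injEq, Fin.mk.injEq] at hE; omega)
      (fgrid_adj n (a+1) (b+2) (a+1) (b+3) (by omega) (by omega) (by omega) (by omega) (by omega))
      (fgrid_adj n (a+1) (b+3) (a+2) (b+3) (by omega) (by omega) (by omega) (by omega) (by omega))
      (fgrid_adj n (a+3) (b+4) (a+2) (b+4) (by omega) (by omega) (by omega) (by omega) (by omega))
      (fgrid_adj n (a+2) (b+4) (a+2) (b+3) (by omega) (by omega) (by omega) (by omega) (by omega))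
      (fgrid_adj n (a+2) (b+3) (a+3) (b+3) (by omega) (by omega) (by omega) (by omega) (by omega))
      (hD 1 2 (by omega) (by omega) (by omega))
      (hD 3 4 (by omega) (by omega) (by omega))

theorem solvable (n : ℕ) (hn : 14 ≤ n) : SolvableDistr (fgrid n n) (Dd n) := by
  rintro ⟨⟨x, hx⟩, ⟨y, hy⟩⟩
  by_cases hf : x < 3 ∨ y < 3 ∨ n - 3 ≤ x ∨ n - 3 ≤ y
  · exact ⟨Dd n, .refl, le_trans (by norm_num) (Dd_frame n x y hx hy hf)⟩
  · push_neg at hf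
    obtain ⟨f1, f2, f3, f4⟩ := hf
    have hveq : ((⟨x, hx⟩ : Fin n), (⟨y, hy⟩ : Fin n))
        = ((⟨(x-3)+3, by omega⟩ : Fin n), (⟨(y-3)+3, by omega⟩ : Fin n)) := by
      rw [Prod.mk.injEq, Fin.mk.injEq, Fin.mk.injEq]
      omega
    rw [hveq]
    exact interiorReach (Dd n) (x-3) (y-3) (by omega) (by omega)
      (fun i j hin hjn hlat => Dd_lat n _ _ hin hjn hlat)

theorem sum_if_le (n B k : ℕ) (P : ℕ → Prop) [DecidablePred P] (f : ℕ → ℕ)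
    (hmem : ∀ y, y < n → P y → f y < B)
    (hinj : ∀ y1, y1 < n → ∀ y2, y2 < n → P y1 → P y2 → f y1 = f y2 → y1 = y2) :
    (∑ y ∈ Finset.range n, if P y then k else 0) ≤ B * k := by
  rw [← Finset.sum_filter]
  have hcard : ((Finset.range n).filter P).card ≤ B := by
    have h := Finset.card_le_card_of_injOn (s := (Finset.range n).filter P) (t := Finset.range B) f
      (fun a ha => by
        rw [Finset.mem_coe, Finset.mem_filter, Finset.mem_range] at ha
        exact Finset.mem_coe.2 (Finset.mem_range.2 (hmem a ha.1 ha.2)))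
      (fun a ha b hb hab => by
        rw [Finset.mem_coe, Finset.mem_filter, Finset.mem_range] at ha hb
        exact hinj a ha.1 b hb.1 ha.2 hb.2 hab)
    simpa using h
  calc (∑ _y ∈ (Finset.range n).filter P, k)
      = ((Finset.range n).filter P).card * k := by rw [Finset.sum_const, smul_eq_mul]
    _ ≤ B * k := Nat.mul_le_mul_right k hcard

theorem sum_fst_le (n B k : ℕ) (P : ℕ → Prop) [DecidablePred P] (f : ℕ → ℕ)
    (hmem : ∀ y, y < n → P y → f y < B)
    (hinj : ∀ y1, y1 < n → ∀ y2, y2 < n → P y1 → P y2 → f y1 = f y2 → y1 = y2) :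
    (∑ v : Fin n × Fin n, if P (v.1 : ℕ) then k else 0) ≤ n * (B * k) := by
  rw [Fintype.sum_prod_type]
  have inner : ∀ x : Fin n, (∑ _y : Fin n, if P (x : ℕ) then k else 0)
      = n * (if P (x : ℕ) then k else 0) := by
    intro x
    rw [Finset.sum_const, Finset.card_univ, Fintype.card_fin, smul_eq_mul]
  calc (∑ x : Fin n, ∑ _y : Fin n, if P (x : ℕ) then k else 0)
      = ∑ x : Fin n, n * (if P (x : ℕ) then k else 0) :=
        Finset.sum_congr rfl (fun x _ => inner x)
    _ = n * ∑ x : Fin n, (if P (x : ℕ) then k else 0) := by rw [Finset.mul_sum]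
    _ = n * ∑ y ∈ Finset.range n, (if P y then k else 0) := by
        exact congrArg (fun z => n * z) (Fin.sum_univ_eq_sum_range (fun y => if P y then k else 0) n)
    _ ≤ n * (B * k) := Nat.mul_le_mul_left n (sum_if_le n B k P f hmem hinj)

theorem sum_snd_le (n B k : ℕ) (P : ℕ → Prop) [DecidablePred P] (f : ℕ → ℕ)
    (hmem : ∀ y, y < n → P y → f y < B)
    (hinj : ∀ y1, y1 < n → ∀ y2, y2 < n → P y1 → P y2 → f y1 = f y2 → y1 = y2) :
    (∑ v : Fin n × Fin n, if P (v.2 : ℕ) then k else 0) ≤ n * (B * k) := by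
  rw [Fintype.sum_prod_type]
  have inner : ∀ x : Fin n, (∑ y : Fin n, if P (y : ℕ) then k else 0)
      ≤ B * k := by
    intro x
    calc (∑ y : Fin n, if P (y : ℕ) then k else 0)
        = ∑ y ∈ Finset.range n, (if P y then k else 0) :=
          Fin.sum_univ_eq_sum_range (fun y => if P y then k else 0) n
      _ ≤ B * k := sum_if_le n B k P f hmem hinj
  calc (∑ _x : Fin n, ∑ y : Fin n, if P (y : ℕ) then k else 0)
      ≤ ∑ _x : Fin n, B * k := Finset.sum_le_sum (fun x _ => inner x)
    _ = n * (B * k) := by rw [Finset.sum_const, Finset.card_univ, Fintype.card_fin, smul_eq_mul]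

theorem sum_lat_le (M : ℕ) :
    (∑ v : Fin (14*M) × Fin (14*M), if (6 * (v.1 : ℕ) + (v.2 : ℕ)) % 14 = 0 then 4 else 0)
      ≤ 14*M*(M*4) := by
  rw [Fintype.sum_prod_type]
  have inner : ∀ x : Fin (14*M),
      (∑ y : Fin (14*M), if (6 * (x : ℕ) + (y : ℕ)) % 14 = 0 then 4 else 0) ≤ M*4 := by
    intro x
    calc (∑ y : Fin (14*M), if (6 * (x : ℕ) + (y : ℕ)) % 14 = 0 then 4 else 0)
        = ∑ y ∈ Finset.range (14*M), if (6 * (x : ℕ) + y) % 14 = 0 then 4 else 0 :=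
          Fin.sum_univ_eq_sum_range (fun y => if (6 * (x : ℕ) + y) % 14 = 0 then 4 else 0) (14*M)
      _ ≤ M*4 := sum_if_le (14*M) M 4 (fun y => (6 * (x : ℕ) + y) % 14 = 0) (fun y => y / 14)
          (fun y hy hP => by
            have hP' : (6 * (x : ℕ) + y) % 14 = 0 := hP
            show y / 14 < M
            omega)
          (fun y1 h1 y2 h2 p1 p2 hf => by
            have p1' : (6 * (x : ℕ) + y1) % 14 = 0 := p1
            have p2' : (6 * (x : ℕ) + y2) % 14 = 0 := p2
            have hf' : y1 / 14 = y2 / 14 := hf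
            omega)
  calc (∑ x : Fin (14*M), ∑ y : Fin (14*M), if (6 * (x : ℕ) + (y : ℕ)) % 14 = 0 then 4 else 0)
      ≤ ∑ _x : Fin (14*M), M*4 := Finset.sum_le_sum (fun x _ => inner x)
    _ = 14*M*(M*4) := by rw [Finset.sum_const, Finset.card_univ, Fintype.card_fin, smul_eq_mul]

theorem sum_Dd_le (M : ℕ) (hM : 1 ≤ M) :
    (∑ v : Fin (14*M) × Fin (14*M), Dd (14*M) v) ≤ 56*M^2 + 336*M := by
  have hb : ∀ v : Fin (14*M) × Fin (14*M), Dd (14*M) v ≤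
      (if (v.1 : ℕ) < 3 then 2 else 0) + ((if 14*M - 3 ≤ (v.1 : ℕ) then 2 else 0) +
      ((if (v.2 : ℕ) < 3 then 2 else 0) + ((if 14*M - 3 ≤ (v.2 : ℕ) then 2 else 0) +
      (if (6 * (v.1 : ℕ) + (v.2 : ℕ)) % 14 = 0 then 4 else 0)))) := by
    intro v
    unfold Dd
    split_ifs <;> omega
  have hsum := Finset.sum_le_sum (fun v (_ : v ∈ Finset.univ) => hb v)
  rw [Finset.sum_add_distrib, Finset.sum_add_distrib, Finset.sum_add_distrib,
    Finset.sum_add_distrib] at hsum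
  have hA : (∑ v : Fin (14*M) × Fin (14*M), if (v.1 : ℕ) < 3 then 2 else 0) ≤ 14*M*(3*2) :=
    sum_fst_le (14*M) 3 2 (fun y => y < 3) (fun y => y) (fun y hy hP => hP)
      (fun y1 h1 y2 h2 p1 p2 hf => hf)
  have hB : (∑ v : Fin (14*M) × Fin (14*M), if 14*M - 3 ≤ (v.1 : ℕ) then 2 else 0)
      ≤ 14*M*(3*2) :=
    sum_fst_le (14*M) 3 2 (fun y => 14*M - 3 ≤ y) (fun y => y - (14*M - 3))
      (fun y hy hP => by
        have hP' : 14*M - 3 ≤ y := hP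
        show y - (14*M - 3) < 3
        omega)
      (fun y1 h1 y2 h2 p1 p2 hf => by
        have p1' : 14*M - 3 ≤ y1 := p1
        have p2' : 14*M - 3 ≤ y2 := p2
        have hf' : y1 - (14*M - 3) = y2 - (14*M - 3) := hf
        omega)
  have hC : (∑ v : Fin (14*M) × Fin (14*M), if (v.2 : ℕ) < 3 then 2 else 0) ≤ 14*M*(3*2) :=
    sum_snd_le (14*M) 3 2 (fun y => y < 3) (fun y => y) (fun y hy hP => hP)
      (fun y1 h1 y2 h2 p1 p2 hf => hf)
  have hD4 : (∑ v : Fin (14*M) × Fin (14*M), if 14*M - 3 ≤ (v.2 : ℕ) then 2 else 0)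
      ≤ 14*M*(3*2) :=
    sum_snd_le (14*M) 3 2 (fun y => 14*M - 3 ≤ y) (fun y => y - (14*M - 3))
      (fun y hy hP => by
        have hP' : 14*M - 3 ≤ y := hP
        show y - (14*M - 3) < 3
        omega)
      (fun y1 h1 y2 h2 p1 p2 hf => by
        have p1' : 14*M - 3 ≤ y1 := p1
        have p2' : 14*M - 3 ≤ y2 := p2
        have hf' : y1 - (14*M - 3) = y2 - (14*M - 3) := hf
        omega)
  have hE := sum_lat_le M
  have hfin : 14*M*(3*2) + (14*M*(3*2) + (14*M*(3*2) + (14*M*(3*2) + 14*M*(M*4))))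
      = 56*M^2 + 336*M := by ring
  calc (∑ v : Fin (14*M) × Fin (14*M), Dd (14*M) v)
      ≤ _ := hsum
    _ ≤ 14*M*(3*2) + (14*M*(3*2) + (14*M*(3*2) + (14*M*(3*2) + 14*M*(M*4)))) :=
        add_le_add hA (add_le_add hB (add_le_add hC (add_le_add hD4 hE)))
    _ = 56*M^2 + 336*M := hfin

/-- The covering ratio of solvable grid distributions is not bounded by `3.25`:
it gets arbitrarily close to `3.5`, in particular it can exceed `3.25`. -/
theorem covering_ratio_exceeds :
    (∀ ε : ℝ, 0 < ε → ∃ n : ℕ, ∃ D : Fin n × Fin n → ℕ,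
      SolvableDistr (fgrid n n) D ∧ (3.5 - ε : ℝ) < (n : ℝ) ^ 2 / (∑ v, (D v : ℝ))) ∧
    ∃ n : ℕ, ∃ D : Fin n × Fin n → ℕ,
      SolvableDistr (fgrid n n) D ∧ (3.25 : ℝ) < (n : ℝ) ^ 2 / (∑ v, (D v : ℝ)) := by
  have hmain : ∀ ε : ℝ, 0 < ε → ∃ n : ℕ, ∃ D : Fin n × Fin n → ℕ,
      SolvableDistr (fgrid n n) D ∧ (3.5 - ε : ℝ) < (n : ℝ) ^ 2 / (∑ v, (D v : ℝ)) := by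
    intro ε hε
    set M : ℕ := Nat.ceil ((21:ℝ)/ε) + 1 with hMdef
    have hM1 : 1 ≤ M := Nat.le_add_left 1 _
    have hn14 : 14 ≤ 14*M := by omega
    refine ⟨14*M, Dd (14*M), solvable (14*M) hn14, ?_⟩
    have hS := sum_Dd_le M hM1
    have hpos : 0 < ∑ v : Fin (14*M) × Fin (14*M), Dd (14*M) v := by
      have h0 : 2 ≤ Dd (14*M) ((⟨0, by omega⟩ : Fin (14*M)), (⟨0, by omega⟩ : Fin (14*M))) :=
        Dd_frame (14*M) 0 0 (by omega) (by omega) (Or.inl (by norm_num))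
      have h1 : Dd (14*M) ((⟨0, by omega⟩ : Fin (14*M)), (⟨0, by omega⟩ : Fin (14*M)))
          ≤ ∑ v : Fin (14*M) × Fin (14*M), Dd (14*M) v :=
        Finset.single_le_sum (fun i _ => Nat.zero_le _) (Finset.mem_univ _)
      exact lt_of_lt_of_le two_pos (le_trans h0 h1)
    have hc : (∑ v : Fin (14*M) × Fin (14*M), (Dd (14*M) v : ℝ))
        = ((∑ v : Fin (14*M) × Fin (14*M), Dd (14*M) v : ℕ) : ℝ) := (Nat.cast_sum _ _).symm
    rw [hc]
    have hSp : (0:ℝ) < ((∑ v : Fin (14*M) × Fin (14*M), Dd (14*M) v : ℕ) : ℝ) := by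
      exact_mod_cast hpos
    have hSr : ((∑ v : Fin (14*M) × Fin (14*M), Dd (14*M) v : ℕ) : ℝ)
        ≤ 56*(M:ℝ)^2 + 336*(M:ℝ) := by exact_mod_cast hS
    rw [lt_div_iff₀ hSp]
    have hn2 : (((14*M : ℕ)) : ℝ)^2 = 196*(M:ℝ)^2 := by push_cast; ring
    rw [hn2]
    have hMR : (1:ℝ) ≤ (M:ℝ) := by exact_mod_cast hM1
    have hM21 : 21 < (M:ℝ) * ε := by
      have h1 : (21:ℝ)/ε ≤ (Nat.ceil ((21:ℝ)/ε) : ℝ) := Nat.le_ceil _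
      have h2 : ((Nat.ceil ((21:ℝ)/ε) : ℕ) : ℝ) < (M:ℝ) := by
        rw [hMdef]; push_cast; linarith
      have h3 : (21:ℝ)/ε < (M:ℝ) := lt_of_le_of_lt h1 h2
      rw [div_lt_iff₀ hε] at h3
      exact h3
    rcases le_or_gt ((3.5:ℝ) - ε) 0 with hsig | hsig
    · have hle : ((3.5:ℝ) - ε) * ((∑ v : Fin (14*M) × Fin (14*M), Dd (14*M) v : ℕ) : ℝ) ≤ 0 :=
        mul_nonpos_of_nonpos_of_nonneg hsig hSp.le
      nlinarith [hMR, sq_nonneg ((M:ℝ) - 1)]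
    · have key : ((3.5:ℝ) - ε) * ((∑ v : Fin (14*M) × Fin (14*M), Dd (14*M) v : ℕ) : ℝ)
          ≤ ((3.5:ℝ) - ε) * (56*(M:ℝ)^2 + 336*(M:ℝ)) := by
        exact mul_le_mul_of_nonneg_left hSr hsig.le
      have hMpos : (0:ℝ) < (M:ℝ) := by linarith
      have h21M : 21 * (M:ℝ) < (M:ℝ) * ε * (M:ℝ) := by
        calc 21 * (M:ℝ) < ((M:ℝ) * ε) * (M:ℝ) := by
              exact mul_lt_mul_of_pos_right hM21 hMpos
          _ = (M:ℝ) * ε * (M:ℝ) := rfl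
      nlinarith [key, h21M, hMR, hε.le, hM21]
  refine ⟨hmain, ?_⟩
  obtain ⟨n, D, hs, hlt⟩ := hmain (1/8) (by norm_num)
  exact ⟨n, D, hs, by linarith⟩
end

section
/- On a path of n+1 vertices v_0,...,v_n, the distribution placing 1 pebble on each of v_1,...,v_n and 2 pebbles on v_0 is solvable; moreover every vertex of the underlying graph at distance at most 1 from the path's reachable set can be reached, so adding the single unit of 2 pebbles to the all-ones row distribution increases the number of reachable vertices by an amount that grows linearly in n. Hence the marginal covering ratio of adding a unit of size 2 can be arbitrarily large. -/
/-- The infinite square grid: vertices `ℤ × ℤ`, adjacency iff Manhattan distance 1. -/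
def gridGraph : SimpleGraph (ℤ × ℤ) where
  Adj p q := (p.1 - q.1).natAbs + (p.2 - q.2).natAbs = 1
  symm := ⟨by intro p q h; omega⟩
  loopless := ⟨by intro p h; simp at h⟩

/- ### Auxiliary definitions -/

/-- The row distribution. -/
def rowD (n : ℕ) : ℤ × ℤ → ℕ := fun p => if p.2 = 0 ∧ 1 ≤ p.1 ∧ p.1 ≤ (n : ℤ) then 1 else 0

/-- Row plus two pebbles at the origin. -/
def DUdef (n : ℕ) : ℤ × ℤ → ℕ := fun p => rowD n p + (if p = (0, 0) then 2 else 0)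

lemma grid_adj {p q : ℤ × ℤ} (h : (p.1 - q.1).natAbs + (p.2 - q.2).natAbs = 1) :
    gridGraph.Adj p q := h

lemma grid_adj' {p q : ℤ × ℤ} (h : gridGraph.Adj p q) :
    (p.1 - q.1).natAbs + (p.2 - q.2).natAbs = 1 := h

/-- A finite box of radius `2n+2`. -/
noncomputable def pebBox (n : ℕ) : Finset (ℤ × ℤ) :=
  Finset.Icc (-(2 * (n : ℤ) + 2), -(2 * (n : ℤ) + 2)) ((2 * (n : ℤ) + 2), (2 * (n : ℤ) + 2))

lemma mem_pebBox {n : ℕ} {p : ℤ × ℤ} :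
    p ∈ pebBox n ↔ p.1.natAbs + p.2.natAbs ≤ 2 * n + 2 ∨
      (p.1.natAbs ≤ 2 * n + 2 ∧ p.2.natAbs ≤ 2 * n + 2) := by
  obtain ⟨x, y⟩ := p
  simp only [pebBox, Finset.mem_Icc, Prod.mk_le_mk]
  omega

/-- Invariant: all pebbles within radius `r`, and `r` plus the total number of pebbles
is at most `2n+2`. -/
def PebInv (n : ℕ) (D : ℤ × ℤ → ℕ) : Prop :=
  ∃ r, (∀ p, 1 ≤ D p → p.1.natAbs + p.2.natAbs ≤ r) ∧
    r + ∑ p ∈ pebBox n, D p ≤ 2 * n + 2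

lemma pebInv_step {n : ℕ} {D1 D2 : ℤ × ℤ → ℕ}
    (h : PebblingMove gridGraph D1 D2) (h1 : PebInv n D1) : PebInv n D2 := by
  obtain ⟨u, v, hadj, hu2, hD2⟩ := h
  obtain ⟨r, hb, hr⟩ := h1
  have hadj' := grid_adj' hadj
  have hne : v ≠ u := by
    intro he; rw [he] at hadj'; omega
  have hub : u.1.natAbs + u.2.natAbs ≤ r := hb u (by omega)
  have humem : u ∈ pebBox n := mem_pebBox.2 (.inl (by omega))
  have hSge : 2 ≤ ∑ p ∈ pebBox n, D1 p :=
    le_trans hu2 (Finset.single_le_sum (fun i _ => Nat.zero_le _) humem)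
  have hrle : r + 2 ≤ 2 * n + 2 := by omega
  have hvb : v.1.natAbs + v.2.natAbs ≤ r + 1 := by omega
  have hvmem : v ∈ pebBox n := mem_pebBox.2 (.inl (by omega))
  -- sum computation
  have hEv : Function.update D1 u (D1 u - 2) v = D1 v := Function.update_of_ne hne _ _
  have hsum2 : ∑ p ∈ pebBox n, D2 p
      = (D1 v + 1) + ∑ p ∈ pebBox n \ {v}, Function.update D1 u (D1 u - 2) p := by
    rw [hD2, Finset.sum_update_of_mem hvmem]
  have humem' : u ∈ pebBox n \ {v} := by
    rw [← Finset.erase_eq]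
    exact Finset.mem_erase.2 ⟨fun he => hne he.symm, humem⟩
  have hsumE : ∑ p ∈ pebBox n \ {v}, Function.update D1 u (D1 u - 2) p
      = (D1 u - 2) + ∑ p ∈ (pebBox n \ {v}) \ {u}, D1 p :=
    Finset.sum_update_of_mem humem' D1 (D1 u - 2)
  have hsplit1 : D1 v + ∑ p ∈ pebBox n \ {v}, D1 p = ∑ p ∈ pebBox n, D1 p := by
    rw [← Finset.erase_eq]
    exact Finset.add_sum_erase _ _ hvmem
  have hsplit2 : D1 u + ∑ p ∈ (pebBox n \ {v}) \ {u}, D1 p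
      = ∑ p ∈ pebBox n \ {v}, D1 p := by
    rw [← Finset.erase_eq]
    exact Finset.add_sum_erase _ _ humem'
  have hsum : ∑ p ∈ pebBox n, D2 p + 1 = ∑ p ∈ pebBox n, D1 p := by omega
  refine ⟨r + 1, ?_, by omega⟩
  intro p hp
  by_cases hpv : p = v
  · subst hpv; omega
  · have hD2p : D2 p = Function.update D1 u (D1 u - 2) p := by
      rw [hD2, Function.update_of_ne hpv]
    by_cases hpu : p = u
    · subst hpu; omega
    · rw [hD2p, Function.update_of_ne hpu] at hp
      exact le_trans (hb p hp) (Nat.le_succ r)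

lemma pebInv_reach {n : ℕ} {D1 D2 : ℤ × ℤ → ℕ}
    (h : Relation.ReflTransGen (PebblingMove gridGraph) D1 D2) (h1 : PebInv n D1) :
    PebInv n D2 := by
  induction h with
  | refl => exact h1
  | tail _ hstep ih => exact pebInv_step hstep ih

/-- The chain distributions: 2 pebbles at `(k,0)`, one pebble at `(j,0)` for `k < j ≤ n`. -/
def chainD (n k : ℕ) : ℤ × ℤ → ℕ := fun p =>
  if p = ((k : ℤ), 0) then 2
  else if p.2 = 0 ∧ (k : ℤ) < p.1 ∧ p.1 ≤ (n : ℤ) then 1 else 0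

lemma chain_zero (n : ℕ) : DUdef n = chainD n 0 := by
  funext p
  obtain ⟨x, y⟩ := p
  simp only [DUdef, rowD, chainD, Prod.mk.injEq, Nat.cast_zero, true_and, and_true]
  split_ifs <;> omega

lemma chain_step (n k : ℕ) (hk : k < n) :
    PebblingMove gridGraph (chainD n k) (chainD n (k + 1)) := by
  refine ⟨((k : ℤ), 0), ((k : ℤ) + 1, 0), grid_adj (by simp), ?_, ?_⟩
  · simp [chainD]
  · funext p
    obtain ⟨x, y⟩ := p
    rw [Function.update_apply, Function.update_apply]
    simp only [chainD, Prod.mk.injEq, Nat.cast_add, Nat.cast_one, true_and, and_true]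
    split_ifs <;> omega

lemma reach_chain (n : ℕ) : ∀ k, k ≤ n →
    Relation.ReflTransGen (PebblingMove gridGraph) (DUdef n) (chainD n k) := by
  intro k
  induction k with
  | zero => intro _; rw [chain_zero n]
  | succ m ih =>
    intro hm
    exact Relation.ReflTransGen.tail (ih (by omega)) (chain_step n m (by omega))

lemma reach_top (n : ℕ) {k : ℕ} (hk1 : 1 ≤ k) (hkn : k ≤ n) :
    PebbleReachable gridGraph (DUdef n) ((k : ℤ), 1) := by
  set u : ℤ × ℤ := ((k : ℤ), 0)
  set v : ℤ × ℤ := ((k : ℤ), 1)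
  have hmove : PebblingMove gridGraph (chainD n k)
      (Function.update (Function.update (chainD n k) u (chainD n k u - 2)) v
        (chainD n k v + 1)) := by
    refine ⟨u, v, grid_adj (by simp [u, v]), ?_, rfl⟩
    simp [chainD, u]
  refine ⟨_, Relation.ReflTransGen.tail (reach_chain n k hkn) hmove, ?_⟩
  rw [Function.update_self]
  omega

lemma no_move_row (n : ℕ) (D'' : ℤ × ℤ → ℕ) : ¬ PebblingMove gridGraph (rowD n) D'' := by
  rintro ⟨u, v, _, h2, _⟩
  have : rowD n u ≤ 1 := by unfold rowD; split_ifs <;> omega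
  omega

lemma reach_row_iff (n : ℕ) (w : ℤ × ℤ) :
    PebbleReachable gridGraph (rowD n) w ↔ 1 ≤ rowD n w := by
  constructor
  · rintro ⟨D', ht, h1⟩
    rcases Relation.ReflTransGen.cases_head ht with h | ⟨c, hc, _⟩
    · rw [h]; exact h1
    · exact absurd hc (no_move_row n c)
  · intro h
    exact ⟨rowD n, Relation.ReflTransGen.refl, h⟩

/-- The row as a finset. -/
noncomputable def rowF (n : ℕ) : Finset (ℤ × ℤ) := (Finset.Icc (1 : ℤ) (n : ℤ)).image (fun k => (k, 0))

/-- The shifted row as a finset. -/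
noncomputable def topF (n : ℕ) : Finset (ℤ × ℤ) := (Finset.Icc (1 : ℤ) (n : ℤ)).image (fun k => (k, 1))

lemma mem_rowF {n : ℕ} {p : ℤ × ℤ} :
    p ∈ rowF n ↔ p.2 = 0 ∧ 1 ≤ p.1 ∧ p.1 ≤ (n : ℤ) := by
  obtain ⟨x, y⟩ := p
  simp only [rowF, Finset.mem_image, Finset.mem_Icc, Prod.mk.injEq]
  constructor
  · rintro ⟨k, ⟨hk1, hk2⟩, hkx, hky⟩; subst hkx; exact ⟨hky.symm, hk1, hk2⟩
  · rintro ⟨hy, h1, h2⟩; exact ⟨x, ⟨h1, h2⟩, rfl, hy.symm⟩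

lemma mem_topF {n : ℕ} {p : ℤ × ℤ} :
    p ∈ topF n ↔ p.2 = 1 ∧ 1 ≤ p.1 ∧ p.1 ≤ (n : ℤ) := by
  obtain ⟨x, y⟩ := p
  simp only [topF, Finset.mem_image, Finset.mem_Icc, Prod.mk.injEq]
  constructor
  · rintro ⟨k, ⟨hk1, hk2⟩, hkx, hky⟩; subst hkx; exact ⟨hky.symm, hk1, hk2⟩
  · rintro ⟨hy, h1, h2⟩; exact ⟨x, ⟨h1, h2⟩, rfl, hy.symm⟩

lemma card_rowF (n : ℕ) : (rowF n).card = n := by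
  rw [rowF, Finset.card_image_of_injective _ (fun a b h => (Prod.mk.injEq _ _ _ _ ▸ h).1),
    Int.card_Icc]
  omega

lemma card_topF (n : ℕ) : (topF n).card = n := by
  rw [topF, Finset.card_image_of_injective _ (fun a b h => (Prod.mk.injEq _ _ _ _ ▸ h).1),
    Int.card_Icc]
  omega

lemma row_set_eq (n : ℕ) :
    {w | PebbleReachable gridGraph (rowD n) w} = ↑(rowF n) := by
  ext p
  rw [Set.mem_setOf_eq, reach_row_iff, Finset.mem_coe, mem_rowF]
  unfold rowD
  split_ifs with h
  · simp [h]
  · simp [h]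

lemma pebInv_init (n : ℕ) : PebInv n (DUdef n) := by
  refine ⟨n, ?_, ?_⟩
  · intro p hp
    unfold DUdef rowD at hp
    by_cases h0 : p = (0, 0)
    · subst h0; simp
    · split_ifs at hp with h
      · obtain ⟨h1, h2, h3⟩ := h
        omega
      · simp [h0] at hp
  · have hbound : ∀ p ∈ pebBox n, DUdef n p ≤
        (if p ∈ rowF n then 1 else 0) + (if p = ((0 : ℤ), (0 : ℤ)) then 2 else 0) := by
      intro p _
      unfold DUdef rowD
      by_cases hr : p ∈ rowF n
      · have := mem_rowF.1 hr
        simp [hr, this]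
      · have : ¬(p.2 = 0 ∧ 1 ≤ p.1 ∧ p.1 ≤ (n : ℤ)) := fun h => hr (mem_rowF.2 h)
        simp [hr, this]
    have hle := Finset.sum_le_sum hbound
    rw [Finset.sum_add_distrib] at hle
    have h1 : ∑ p ∈ pebBox n, (if p ∈ rowF n then 1 else 0) ≤ n := by
      rw [Finset.sum_ite_mem]
      simp only [Finset.sum_const, smul_eq_mul, mul_one]
      calc ((pebBox n) ∩ rowF n).card ≤ (rowF n).card :=
            Finset.card_le_card (Finset.inter_subset_right)
        _ = n := card_rowF n
    have h2 : ∑ p ∈ pebBox n, (if p = ((0 : ℤ), (0 : ℤ)) then 2 else 0) ≤ 2 := by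
      rw [Finset.sum_ite_eq' (pebBox n) ((0 : ℤ), (0 : ℤ)) (fun _ => 2)]
      split_ifs <;> omega
    omega

lemma reach_DU_subset_box (n : ℕ) :
    {w | PebbleReachable gridGraph (DUdef n) w} ⊆ ↑(pebBox n) := by
  rintro p ⟨D', ht, h1⟩
  obtain ⟨r, hb, hr⟩ := pebInv_reach ht (pebInv_init n)
  exact Finset.mem_coe.2 (mem_pebBox.2 (.inl (le_trans (hb p h1) (by omega))))

/-- `D` puts one pebble on each of `(1,0),…,(n,0)`; adding a unit `U` of two pebbles at
`(0,0)` increases the number of reachable vertices from `n` by at least `n`, so the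
marginal covering ratio of the added unit is at least `n/2`, unbounded as `n → ∞`. -/
theorem marginal_covering_ratio_unbounded (n : ℕ) (hn : 1 ≤ n) :
    let D : ℤ × ℤ → ℕ := fun p => if p.2 = 0 ∧ 1 ≤ p.1 ∧ p.1 ≤ (n : ℤ) then 1 else 0
    let DU : ℤ × ℤ → ℕ := fun p => D p + (if p = (0, 0) then 2 else 0)
    {w | PebbleReachable gridGraph D w}.ncard = n ∧
    {w | PebbleReachable gridGraph D w}.ncard + n ≤
      {w | PebbleReachable gridGraph DU w}.ncard := by
  intro D DU
  have hD : D = rowD n := rfl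
  have hDU : DU = DUdef n := rfl
  rw [hD, hDU]
  have hcard1 : {w | PebbleReachable gridGraph (rowD n) w}.ncard = n := by
    rw [row_set_eq n, Set.ncard_coe_finset, card_rowF]
  refine ⟨hcard1, ?_⟩
  rw [hcard1]
  -- the union of the row and the top row is reachable under DU
  have hsub : ↑(rowF n ∪ topF n) ⊆ {w | PebbleReachable gridGraph (DUdef n) w} := by
    intro p hp
    rcases Finset.mem_union.1 (Finset.mem_coe.1 hp) with h | h
    · -- already has a pebble
      refine ⟨DUdef n, Relation.ReflTransGen.refl, ?_⟩
      have := mem_rowF.1 h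
      unfold DUdef rowD
      simp [this]
    · obtain ⟨hy, h1, h2⟩ := mem_topF.1 h
      obtain ⟨x, y⟩ := p
      simp only at hy h1 h2
      subst hy
      have hx : x = ((x.toNat : ℕ) : ℤ) := by omega
      rw [Set.mem_setOf_eq, hx]
      exact reach_top n (by omega) (by omega)
  have hfin : {w | PebbleReachable gridGraph (DUdef n) w}.Finite :=
    Set.Finite.subset (pebBox n).finite_toSet (reach_DU_subset_box n)
  have hdisj : Disjoint (rowF n) (topF n) := by
    rw [Finset.disjoint_left]
    intro p hp hp'
    have h0 := (mem_rowF.1 hp).1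
    have h1 := (mem_topF.1 hp').1
    omega
  have hcardU : (↑(rowF n ∪ topF n) : Set (ℤ × ℤ)).ncard = n + n := by
    rw [Set.ncard_coe_finset, Finset.card_union_of_disjoint hdisj, card_rowF, card_topF]
  calc n + n = (↑(rowF n ∪ topF n) : Set (ℤ × ℤ)).ncard := hcardU.symm
    _ ≤ {w | PebbleReachable gridGraph (DUdef n) w}.ncard :=
        Set.ncard_le_ncard hsub hfin
end

section
/- The optimal fractional covering ratio of the infinite square grid is 9: placing 1/9 pebbles on every vertex gives every vertex weight exactly 1, and no fractional distribution covering an n×n grid can have size less than n²/9. -/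
/-! ### Auxiliary: the graph distance is the Manhattan distance -/

def md (u v : ℤ × ℤ) : ℕ := (u.1 - v.1).natAbs + (u.2 - v.2).natAbs

lemma grid_adj_s11 {u v : ℤ × ℤ} : gridGraph.Adj u v ↔ md u v = 1 := Iff.rfl

lemma exists_walk (m : ℕ) : ∀ u v : ℤ × ℤ, md u v = m →
    ∃ w : gridGraph.Walk u v, w.length = m := by
  induction m with
  | zero =>
    intro u v h
    have h1 : u = v := by
      unfold md at h
      have : u.1 = v.1 ∧ u.2 = v.2 := by omega
      exact Prod.ext this.1 this.2
    subst h1; exact ⟨.nil, rfl⟩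
  | succ m ih =>
    intro u v h
    set w : ℤ × ℤ := if u.1 < v.1 then (u.1 + 1, u.2) else if v.1 < u.1 then (u.1 - 1, u.2)
      else if u.2 < v.2 then (u.1, u.2 + 1) else (u.1, u.2 - 1) with hw
    have hadj : gridGraph.Adj u w := by
      rw [grid_adj_s11]; unfold md at h ⊢; rw [hw]; split_ifs <;> simp <;> omega
    have hmd : md w v = m := by
      unfold md at h ⊢; rw [hw]; split_ifs <;> simp <;> omega
    obtain ⟨p, hp⟩ := ih w v hmd
    exact ⟨.cons hadj p, by simp [hp]⟩

lemma md_le_length : ∀ {u v : ℤ × ℤ} (w : gridGraph.Walk u v), md u v ≤ w.length := by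
  intro u v w
  induction w with
  | nil => simp [md]
  | @cons a b c h p ih =>
    rw [grid_adj_s11] at h
    unfold md at h ih ⊢
    simp only [SimpleGraph.Walk.length_cons]
    omega

lemma grid_dist (u v : ℤ × ℤ) : gridGraph.dist u v = md u v := by
  obtain ⟨w, hw⟩ := exists_walk (md u v) u v rfl
  have h1 : gridGraph.dist u v ≤ md u v := hw ▸ SimpleGraph.dist_le w
  obtain ⟨p, hp⟩ := SimpleGraph.Reachable.exists_walk_length_eq_dist ⟨w⟩
  have h2 := md_le_length p
  omega

/-! ### Auxiliary: geometric sums over `ℤ` and `ℤ × ℤ` -/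

noncomputable def g (a : ℤ) : ℝ := (1/2 : ℝ) ^ a.natAbs

lemma g_nonneg (a : ℤ) : 0 ≤ g a := by unfold g; positivity

lemma g_nat_summable : Summable (fun n : ℕ => g n) := by
  have : (fun n : ℕ => g n) = fun n : ℕ => (1/2 : ℝ) ^ n := by
    funext n; simp [g]
  rw [this]
  exact summable_geometric_of_lt_one (by norm_num) (by norm_num)

lemma g_neg_summable : Summable (fun n : ℕ => g (-(n + 1))) := by
  have : (fun n : ℕ => g (-(n+1))) = fun n : ℕ => (1/2 : ℝ) ^ (n+1) := by
    funext n; simp [g]; rw [show (-1 + -(n:ℤ)).natAbs = n+1 by omega]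
  rw [this]
  exact (summable_geometric_of_lt_one (by norm_num) (by norm_num)).comp_injective
    (add_left_injective 1)

lemma g_summable : Summable g := Summable.of_nat_of_neg_add_one g_nat_summable g_neg_summable

lemma g_tsum : ∑' a : ℤ, g a = 3 := by
  rw [tsum_of_nat_of_neg_add_one g_nat_summable g_neg_summable]
  have h1 : ∑' n : ℕ, g n = 2 := by
    have : (fun n : ℕ => g n) = fun n : ℕ => (1/2 : ℝ) ^ n := by funext n; simp [g]
    rw [this, tsum_geometric_of_lt_one (by norm_num) (by norm_num)]; norm_num
  have h2 : ∑' n : ℕ, g (-(n+1)) = 1 := by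
    have : (fun n : ℕ => g (-(n+1))) = fun n : ℕ => (1/2 : ℝ) * (1/2 : ℝ) ^ n := by
      funext n; simp [g]; rw [show ((-1 : ℤ) + -n).natAbs = n+1 by omega, pow_succ]; ring
    rw [this, tsum_mul_left, tsum_geometric_of_lt_one (by norm_num) (by norm_num)]; norm_num
  rw [h1, h2]; norm_num

noncomputable def f2 (w : ℤ × ℤ) : ℝ := g w.1 * g w.2

lemma f2_nonneg (w : ℤ × ℤ) : 0 ≤ f2 w := mul_nonneg (g_nonneg _) (g_nonneg _)

lemma f2_summable : Summable f2 :=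
  g_summable.mul_of_nonneg g_summable g_nonneg g_nonneg

lemma f2_tsum : ∑' w : ℤ × ℤ, f2 w = 9 := by
  have := Summable.tsum_mul_tsum g_summable g_summable f2_summable
  rw [g_tsum] at this
  rw [show (9:ℝ) = 3 * 3 by norm_num, this]; rfl

/-! ### The weight function -/

lemma weight_fun_eq (u : ℤ × ℤ) :
    (fun v : ℤ × ℤ => ((1/2 : ℝ)) ^ (gridGraph.dist u v)) =
      fun v => f2 ((Equiv.prodCongr (Equiv.subLeft u.1) (Equiv.subLeft u.2)) v) := by
  funext v
  have he : (Equiv.prodCongr (Equiv.subLeft u.1) (Equiv.subLeft u.2)) v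
      = (u.1 - v.1, u.2 - v.2) := rfl
  rw [he, grid_dist]
  show ((1/2 : ℝ)) ^ (md u v) = g (u.1 - v.1) * g (u.2 - v.2)
  unfold md g
  rw [← pow_add]

lemma weight_summable (u : ℤ × ℤ) :
    Summable (fun v : ℤ × ℤ => ((1/2 : ℝ)) ^ (gridGraph.dist u v)) := by
  rw [weight_fun_eq u]
  exact f2_summable.comp_injective (Equiv.injective _)

lemma weight_tsum (u : ℤ × ℤ) :
    ∑' v : ℤ × ℤ, ((1/2 : ℝ)) ^ (gridGraph.dist u v) = 9 := by
  rw [weight_fun_eq u]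
  rw [(Equiv.prodCongr (Equiv.subLeft u.1) (Equiv.subLeft u.2)).tsum_eq f2]
  exact f2_tsum

/-- The optimal fractional covering ratio of the grid is 9: placing `1/9` pebbles
everywhere gives every vertex weight exactly 1, and any (summable, nonnegative)
fractional distribution covering an `n × n` subgrid has size at least `n²/9`. -/
theorem optimal_fractional_covering_ratio (n : ℕ) :
    (∀ u : ℤ × ℤ, ∑' v : ℤ × ℤ, (1 / 9 : ℝ) * (1 / 2) ^ (gridGraph.dist u v) = 1) ∧
    (∀ D : ℤ × ℤ → ℝ, (∀ v, 0 ≤ D v) → Summable D →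
      (∀ u : ℤ × ℤ, 0 ≤ u.1 → u.1 < (n : ℤ) → 0 ≤ u.2 → u.2 < (n : ℤ) →
        1 ≤ ∑' v : ℤ × ℤ, D v * (1 / 2) ^ (gridGraph.dist u v)) →
      (n : ℝ) ^ 2 / 9 ≤ ∑' v, D v) := by
  constructor
  · intro u
    rw [tsum_mul_left, weight_tsum u]
    norm_num
  · intro D hD hsum hcov
    set S : Finset (ℤ × ℤ) := (Finset.Ico (0:ℤ) (n:ℤ)) ×ˢ (Finset.Ico (0:ℤ) (n:ℤ)) with hS
    have hcard : S.card = n * n := by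
      simp [hS, Int.card_Ico]
    have hterm_nonneg : ∀ u v : ℤ × ℤ, 0 ≤ D v * (1/2 : ℝ) ^ (gridGraph.dist u v) :=
      fun u v => mul_nonneg (hD v) (by positivity)
    have hsummand : ∀ u : ℤ × ℤ, Summable (fun v => D v * (1/2 : ℝ) ^ (gridGraph.dist u v)) := by
      intro u
      refine Summable.of_nonneg_of_le (fun v => hterm_nonneg u v) (fun v => ?_) hsum
      calc D v * (1/2 : ℝ) ^ (gridGraph.dist u v) ≤ D v * 1 :=
            mul_le_mul_of_nonneg_left (pow_le_one₀ (by norm_num) (by norm_num)) (hD v)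
        _ = D v := mul_one _
    have hb : ∀ v : ℤ × ℤ, ∑ u ∈ S, ((1/2 : ℝ)) ^ (gridGraph.dist u v) ≤ 9 := by
      intro v
      have h1 : ∑ u ∈ S, ((1/2 : ℝ)) ^ (gridGraph.dist u v)
          = ∑ u ∈ S, ((1/2 : ℝ)) ^ (gridGraph.dist v u) :=
        Finset.sum_congr rfl fun u _ => by rw [SimpleGraph.dist_comm]
      rw [h1]
      calc ∑ u ∈ S, ((1/2 : ℝ)) ^ (gridGraph.dist v u)
        ≤ ∑' u : ℤ × ℤ, ((1/2 : ℝ)) ^ (gridGraph.dist v u) :=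
            Summable.sum_le_tsum S (fun u _ => by positivity) (weight_summable v)
        _ = 9 := weight_tsum v
    have key : (n : ℝ) ^ 2 ≤ ∑ u ∈ S, ∑' v : ℤ × ℤ, D v * (1/2 : ℝ) ^ (gridGraph.dist u v) := by
      have : ∀ u ∈ S, (1 : ℝ) ≤ ∑' v : ℤ × ℤ, D v * (1/2 : ℝ) ^ (gridGraph.dist u v) := by
        intro u hu
        simp only [hS, Finset.mem_product, Finset.mem_Ico] at hu
        exact hcov u hu.1.1 hu.1.2 hu.2.1 hu.2.2
      calc (n : ℝ) ^ 2 = ∑ _u ∈ S, (1 : ℝ) := by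
            rw [Finset.sum_const, hcard]; push_cast; ring
        _ ≤ _ := Finset.sum_le_sum this
    have hswap : ∑ u ∈ S, ∑' v : ℤ × ℤ, D v * (1/2 : ℝ) ^ (gridGraph.dist u v)
        = ∑' v : ℤ × ℤ, ∑ u ∈ S, D v * (1/2 : ℝ) ^ (gridGraph.dist u v) :=
      (Summable.tsum_finsetSum fun u _ => hsummand u).symm
    have hfin : ∑' v : ℤ × ℤ, ∑ u ∈ S, D v * (1/2 : ℝ) ^ (gridGraph.dist u v)
        ≤ ∑' v : ℤ × ℤ, D v * 9 := by
      refine Summable.tsum_le_tsum (fun v => ?_) (summable_sum fun u _ => hsummand u) (hsum.mul_right 9)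
      rw [← Finset.mul_sum]
      exact mul_le_mul_of_nonneg_left (hb v) (hD v)
    have hend : ∑' v : ℤ × ℤ, D v * 9 = (∑' v, D v) * 9 := tsum_mul_right
    have : (n : ℝ) ^ 2 ≤ (∑' v, D v) * 9 := by
      rw [← hend]; rw [hswap] at key; linarith [key, hfin]
    linarith
end

section
/- For the distribution D_{n,m} on the (5m+1)×(2n+1) grid placing 3 pebbles on every second vertex of every fifth row (rows 0,5,10,...,5m; columns 0,2,...,2n), every vertex of the grid has weight at least 1. -/
lemma fgrid_exists_walk {r c : ℕ} :
    ∀ N (u v : Fin r × Fin c),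
      ((u.1:ℤ) - v.1).natAbs + ((u.2:ℤ) - v.2).natAbs = N →
      ∃ p : (fgrid r c).Walk u v, p.length = N := by
  intro N
  induction N with
  | zero =>
    intro u v h
    have h1 : u = v := by
      have := u.1.isLt; have := v.1.isLt
      obtain ⟨⟨a,ha⟩,⟨b,hb⟩⟩ := u; obtain ⟨⟨a',ha'⟩,⟨b',hb'⟩⟩ := v
      simp only [Prod.mk.injEq, Fin.mk.injEq]
      simp only at h
      omega
    subst h1
    exact ⟨SimpleGraph.Walk.nil, rfl⟩
  | succ n ih =>
    intro u v h
    rcases lt_trichotomy (u.1 : ℕ) (v.1 : ℕ) with h1 | h1 | h1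
    · have hlt : (u.1 : ℕ) + 1 < r := by have := v.1.isLt; omega
      set w : Fin r × Fin c := (⟨u.1 + 1, hlt⟩, u.2) with hwdef
      have hadj : (fgrid r c).Adj u w := by
        show ((u.1:ℤ) - (w.1:ℤ)).natAbs + ((u.2:ℤ) - (w.2:ℤ)).natAbs = 1
        simp [hwdef]
      have hw : ((w.1:ℤ) - v.1).natAbs + ((w.2:ℤ) - v.2).natAbs = n := by
        simp only [hwdef]
        push_cast
        omega
      obtain ⟨p, hp⟩ := ih w v hw
      exact ⟨SimpleGraph.Walk.cons hadj p, by simp [hp]⟩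
    · -- rows equal, move in column
      rcases lt_trichotomy (u.2 : ℕ) (v.2 : ℕ) with h2 | h2 | h2
      · have hlt : (u.2 : ℕ) + 1 < c := by have := v.2.isLt; omega
        set w : Fin r × Fin c := (u.1, ⟨u.2 + 1, hlt⟩) with hwdef
        have hadj : (fgrid r c).Adj u w := by
          show ((u.1:ℤ) - (w.1:ℤ)).natAbs + ((u.2:ℤ) - (w.2:ℤ)).natAbs = 1
          simp [hwdef]
        have hw : ((w.1:ℤ) - v.1).natAbs + ((w.2:ℤ) - v.2).natAbs = n := by
          simp only [hwdef]
          push_cast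
          omega
        obtain ⟨p, hp⟩ := ih w v hw
        exact ⟨SimpleGraph.Walk.cons hadj p, by simp [hp]⟩
      · exfalso; omega
      · have hpos : 0 < (u.2 : ℕ) := by omega
        set w : Fin r × Fin c := (u.1, ⟨u.2 - 1, by omega⟩) with hwdef
        have hadj : (fgrid r c).Adj u w := by
          show ((u.1:ℤ) - (w.1:ℤ)).natAbs + ((u.2:ℤ) - (w.2:ℤ)).natAbs = 1
          simp [hwdef]
          omega
        have hw : ((w.1:ℤ) - v.1).natAbs + ((w.2:ℤ) - v.2).natAbs = n := by
          simp only [hwdef]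
          push_cast
          omega
        obtain ⟨p, hp⟩ := ih w v hw
        exact ⟨SimpleGraph.Walk.cons hadj p, by simp [hp]⟩
    · have hpos : 0 < (u.1 : ℕ) := by omega
      set w : Fin r × Fin c := (⟨u.1 - 1, by omega⟩, u.2) with hwdef
      have hadj : (fgrid r c).Adj u w := by
        show ((u.1:ℤ) - (w.1:ℤ)).natAbs + ((u.2:ℤ) - (w.2:ℤ)).natAbs = 1
        simp [hwdef]
        omega
      have hw : ((w.1:ℤ) - v.1).natAbs + ((w.2:ℤ) - v.2).natAbs = n := by
        simp only [hwdef]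
        push_cast
        omega
      obtain ⟨p, hp⟩ := ih w v hw
      exact ⟨SimpleGraph.Walk.cons hadj p, by simp [hp]⟩

lemma fgrid_dist_le {r c : ℕ} (u v : Fin r × Fin c) :
    (fgrid r c).dist u v ≤ ((u.1:ℤ) - v.1).natAbs + ((u.2:ℤ) - v.2).natAbs := by
  obtain ⟨p, hp⟩ := fgrid_exists_walk _ u v rfl
  simpa [hp] using SimpleGraph.dist_le p

lemma term_bound {r c : ℕ} (u v : Fin r × Fin c)
    (h5 : v.1.val % 5 = 0) (h2 : v.2.val % 2 = 0) (k : ℕ)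
    (hk : ((u.1:ℤ) - v.1).natAbs + ((u.2:ℤ) - v.2).natAbs ≤ k) :
    3 * (1/2:ℝ)^k ≤
      ((if v.1.val % 5 = 0 ∧ v.2.val % 2 = 0 then 3 else 0 : ℕ) : ℝ) *
        (1/2) ^ ((fgrid r c).dist u v) := by
  rw [if_pos ⟨h5, h2⟩]
  have hd : (fgrid r c).dist u v ≤ k := le_trans (fgrid_dist_le u v) hk
  have := pow_le_pow_of_le_one (by norm_num : (0:ℝ) ≤ 1/2) (by norm_num) hd
  push_cast
  linarith

lemma row_contrib (m n : ℕ) (u : Fin (5*m+1) × Fin (2*n+1)) (r k : ℕ)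
    (hr5 : r % 5 = 0) (hr : r ≤ 5*m)
    (hk : ((u.1:ℤ) - r).natAbs ≤ k) :
    3 * (1/2:ℝ)^k ≤ ∑ v ∈ Finset.univ.filter (fun v : Fin (5*m+1) × Fin (2*n+1) => v.1.val = r),
      ((if v.1.val % 5 = 0 ∧ v.2.val % 2 = 0 then 3 else 0 : ℕ) : ℝ) *
        (1/2) ^ ((fgrid (5*m+1) (2*n+1)).dist u v) := by
  set f : Fin (5*m+1) × Fin (2*n+1) → ℝ := fun v =>
    ((if v.1.val % 5 = 0 ∧ v.2.val % 2 = 0 then 3 else 0 : ℕ) : ℝ) *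
      (1/2) ^ ((fgrid (5*m+1) (2*n+1)).dist u v) with hf
  have hnonneg : ∀ v ∈ Finset.univ.filter (fun v : Fin (5*m+1) × Fin (2*n+1) => v.1.val = r),
      v ∉ (∅ : Finset _) → 0 ≤ f v := by
    intro v _ _; rw [hf]; positivity
  have hj := u.2.isLt
  rcases Nat.even_or_odd (u.2 : ℕ) with hje | hjo
  · -- one pebble at (r, u.2)
    set a : Fin (5*m+1) × Fin (2*n+1) := (⟨r, by omega⟩, u.2) with ha
    have hsub : {a} ⊆ Finset.univ.filter (fun v : Fin (5*m+1) × Fin (2*n+1) => v.1.val = r) := by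
      intro x hx
      rw [Finset.mem_singleton] at hx
      subst hx
      rw [Finset.mem_filter]
      exact ⟨Finset.mem_univ _, rfl⟩
    have := Finset.sum_le_sum_of_subset_of_nonneg (f := f) hsub (by
      intro v hv _; rw [hf]; positivity)
    rw [Finset.sum_singleton] at this
    refine le_trans ?_ this
    apply term_bound
    · simpa [ha] using hr5
    · simpa [ha] using (Nat.even_iff.mp hje)
    · simp only [ha]
      push_cast
      omega
  · -- two pebbles at (r, u.2 ± 1)
    have hj1 : (u.2 : ℕ) ≥ 1 := by rcases hjo with ⟨t, ht⟩; omega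
    have hj2 : (u.2 : ℕ) + 1 < 2*n+1 := by
      rcases hjo with ⟨t, ht⟩; omega
    set a : Fin (5*m+1) × Fin (2*n+1) := (⟨r, by omega⟩, ⟨(u.2:ℕ) - 1, by omega⟩) with ha
    set b : Fin (5*m+1) × Fin (2*n+1) := (⟨r, by omega⟩, ⟨(u.2:ℕ) + 1, hj2⟩) with hb
    have hab : a ≠ b := by
      simp only [ha, hb, Ne, Prod.mk.injEq, Fin.mk.injEq]
      omega
    have hsub : {a, b} ⊆ Finset.univ.filter (fun v : Fin (5*m+1) × Fin (2*n+1) => v.1.val = r) := by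
      intro x hx
      rw [Finset.mem_insert, Finset.mem_singleton] at hx
      rw [Finset.mem_filter]
      rcases hx with hx | hx <;> subst hx <;> exact ⟨Finset.mem_univ _, rfl⟩
    have hle := Finset.sum_le_sum_of_subset_of_nonneg (f := f) hsub (by
      intro v hv _; rw [hf]; positivity)
    rw [Finset.sum_pair hab] at hle
    refine le_trans ?_ hle
    have hA : 3 * (1/2:ℝ)^(k+1) ≤ f a := by
      apply term_bound
      · simpa [ha] using hr5
      · simp only [ha]; rcases hjo with ⟨t, ht⟩; omega
      · simp only [ha]; push_cast; omega
    have hB : 3 * (1/2:ℝ)^(k+1) ≤ f b := by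
      apply term_bound
      · simpa [hb] using hr5
      · simp only [hb]; rcases hjo with ⟨t, ht⟩; omega
      · simp only [hb]; push_cast; omega
    have : (3:ℝ) * (1/2)^k = 3 * (1/2)^(k+1) + 3 * (1/2)^(k+1) := by ring
    linarith

/-- The distribution with 3 pebbles on every second vertex of every fifth row of the
`(5m+1) × (2n+1)` grid gives every vertex weight at least 1. -/
theorem every_fifth_row_covers (m n : ℕ) :
    let D : Fin (5 * m + 1) × Fin (2 * n + 1) → ℕ :=
      fun p => if p.1.val % 5 = 0 ∧ p.2.val % 2 = 0 then 3 else 0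
    ∀ u : Fin (5 * m + 1) × Fin (2 * n + 1),
      1 ≤ ∑ v, (D v : ℝ) * (1 / 2) ^ ((fgrid (5 * m + 1) (2 * n + 1)).dist u v) := by
  intro D u
  set f : Fin (5*m+1) × Fin (2*n+1) → ℝ := fun v =>
    ((if v.1.val % 5 = 0 ∧ v.2.val % 2 = 0 then 3 else 0 : ℕ) : ℝ) *
      (1/2) ^ ((fgrid (5*m+1) (2*n+1)).dist u v) with hf
  have hDf : ∀ v, (D v : ℝ) * (1/2) ^ ((fgrid (5*m+1) (2*n+1)).dist u v) = f v := fun v => rfl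
  have hgoal : (1:ℝ) ≤ ∑ v, f v := by
    have hnn : ∀ v : Fin (5*m+1) × Fin (2*n+1), 0 ≤ f v := by
      intro v; rw [hf]; positivity
    -- helper: one-row estimate
    have one_row : ∀ r k : ℕ, r % 5 = 0 → r ≤ 5*m → ((u.1:ℤ) - r).natAbs ≤ k →
        3 * (1/2:ℝ)^k ≤ ∑ v, f v := by
      intro r k h1 h2 h3
      refine le_trans (row_contrib m n u r k h1 h2 h3) ?_
      exact Finset.sum_le_sum_of_subset_of_nonneg (Finset.subset_univ _)
        (fun v _ _ => hnn v)
    have two_rows : ∀ r1 r2 k1 k2 : ℕ, r1 % 5 = 0 → r2 % 5 = 0 → r1 ≤ 5*m → r2 ≤ 5*m →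
        r1 ≠ r2 → ((u.1:ℤ) - r1).natAbs ≤ k1 → ((u.1:ℤ) - r2).natAbs ≤ k2 →
        3 * (1/2:ℝ)^k1 + 3 * (1/2:ℝ)^k2 ≤ ∑ v, f v := by
      intro r1 r2 k1 k2 h1 h2 h3 h4 hne h5 h6
      have ha := row_contrib m n u r1 k1 h1 h3 h5
      have hb := row_contrib m n u r2 k2 h2 h4 h6
      have hdisj : Disjoint (Finset.univ.filter (fun v : Fin (5*m+1) × Fin (2*n+1) => v.1.val = r1))
          (Finset.univ.filter (fun v : Fin (5*m+1) × Fin (2*n+1) => v.1.val = r2)) := by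
        rw [Finset.disjoint_left]
        intro v hv1 hv2
        rw [Finset.mem_filter] at hv1 hv2
        exact hne (hv1.2 ▸ hv2.2 ▸ rfl)
      have hunion := Finset.sum_union (f := f) hdisj
      have hsub : ((Finset.univ.filter (fun v : Fin (5*m+1) × Fin (2*n+1) => v.1.val = r1)) ∪
          (Finset.univ.filter (fun v : Fin (5*m+1) × Fin (2*n+1) => v.1.val = r2))) ⊆ Finset.univ :=
        Finset.subset_univ _
      have := Finset.sum_le_sum_of_subset_of_nonneg (f := f) hsub (fun v _ _ => hnn v)
      rw [hunion] at this
      linarith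
    obtain ⟨⟨i, hi⟩, jj⟩ := u
    have h5 : i % 5 = 0 ∨ i % 5 = 1 ∨ i % 5 = 2 ∨ i % 5 = 3 ∨ i % 5 = 4 := by omega
    rcases h5 with h | h | h | h | h
    · have := one_row i 0 h (by omega) (by push_cast; omega)
      linarith [this]
    · have := one_row (i-1) 1 (by omega) (by omega) (by push_cast; omega)
      norm_num at this ⊢
      linarith
    · have := two_rows (i-2) (i+3) 2 3 (by omega) (by omega) (by omega) (by omega)
        (by omega) (by push_cast; omega) (by push_cast; omega)
      norm_num at this ⊢
      linarith
    · have := two_rows (i+2) (i-3) 2 3 (by omega) (by omega) (by omega) (by omega)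
        (by omega) (by push_cast; omega) (by push_cast; omega)
      norm_num at this ⊢
      linarith
    · have := one_row (i+1) 1 (by omega) (by omega) (by push_cast; omega)
      norm_num at this ⊢
      linarith
  calc (1:ℝ) ≤ ∑ v, f v := hgoal
    _ = ∑ v, (D v : ℝ) * (1/2) ^ ((fgrid (5*m+1) (2*n+1)).dist u v) := by
      exact Finset.sum_congr rfl (fun v _ => (hDf v).symm)
end

section
/- For the distribution with 3 pebbles on every second vertex of rows 0,5,...,5m of the (5m+1)×(2n+1) grid, the set of reachable vertices is exactly the union of rows at vertical distance at most 1 from a pebbled row; i.e., rows 5k−1, 5k, 5k+1 are reachable and rows 5k+2, 5k+3 are not. Hence the covering ratio is (3m+1)(2n+1)/(3(n+1)(m+1)) < 2. -/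
section EveryFifthRowAux

/-- Carry chain: maximal number of pebbles deliverable to a point from a line of
pebbles `f 0, f 1, ...` (nearest first), looking at the first `n` positions. -/
def car : (ℕ → ℕ) → ℕ → ℕ
  | _, 0 => 0
  | f, n+1 => (f 0 + car (fun j => f (j+1)) n) / 2

lemma car_succ (f : ℕ → ℕ) (n : ℕ) :
    car f (n+1) = (f 0 + car (fun j => f (j+1)) n) / 2 := rfl

lemma car_mono : ∀ (n : ℕ) (f g : ℕ → ℕ), (∀ j, j < n → f j ≤ g j) → car f n ≤ car g n
  | 0, _, _, _ => le_refl 0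
  | n+1, f, g, h => by
    simp only [car_succ]
    have h1 := car_mono n (fun j => f (j+1)) (fun j => g (j+1)) (fun j hj => h (j+1) (by omega))
    have h0 := h 0 (by omega)
    omega

lemma car_congr (n : ℕ) (f g : ℕ → ℕ) (h : ∀ j, j < n → f j = g j) : car f n = car g n :=
  le_antisymm (car_mono n f g fun j hj => (h j hj).le) (car_mono n g f fun j hj => (h j hj).ge)

lemma car_eq_zero (n : ℕ) (f : ℕ → ℕ) (h : ∀ j, j < n → f j = 0) : car f n = 0 := by
  induction n generalizing f with
  | zero => rfl
  | succ n ih =>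
    simp only [car_succ, h 0 (by omega), ih (fun j => f (j+1)) (fun j hj => h (j+1) (by omega))]

lemma car_headsub (n : ℕ) (f g : ℕ → ℕ) (hn : 0 < n) (h0 : g 0 + 2 = f 0)
    (h : ∀ j, 0 < j → j < n → g j = f j) : car g n + 1 ≤ car f n := by
  obtain ⟨k, rfl⟩ : ∃ k, n = k + 1 := ⟨n - 1, by omega⟩
  simp only [car_succ]
  have := car_congr k (fun j => g (j+1)) (fun j => f (j+1))
    (fun j hj => h (j+1) (by omega) (by omega))
  omega

lemma car_headadd (n : ℕ) (f g : ℕ → ℕ) (h0 : g 0 = f 0 + 1)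
    (h : ∀ j, 0 < j → j < n → g j = f j) : car g n ≤ car f n + 1 := by
  cases n with
  | zero => simp [car]
  | succ k =>
    simp only [car_succ]
    have := car_congr k (fun j => g (j+1)) (fun j => f (j+1))
      (fun j hj => h (j+1) (by omega) (by omega))
    omega

lemma car_away : ∀ (i n : ℕ) (f g : ℕ → ℕ), i + 1 < n → g i + 2 = f i →
    g (i+1) = f (i+1) + 1 → (∀ j, j < n → j ≠ i → j ≠ i+1 → g j = f j) →
    car g n ≤ car f n
  | 0, n, f, g, hin, hi, hi1, h => by
    obtain ⟨k, rfl⟩ : ∃ k, n = k + 1 := ⟨n - 1, by omega⟩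
    simp only [car_succ]
    have hs : car (fun j => g (j+1)) k ≤ car (fun j => f (j+1)) k + 1 :=
      car_headadd k _ _ hi1 (fun j hj hjk => h (j+1) (by omega) (by omega) (by omega))
    omega
  | i+1, n, f, g, hin, hi, hi1, h => by
    obtain ⟨k, rfl⟩ : ∃ k, n = k + 1 := ⟨n - 1, by omega⟩
    simp only [car_succ]
    have hs : car (fun j => g (j+1)) k ≤ car (fun j => f (j+1)) k :=
      car_away i k _ _ (by omega) hi hi1 (fun j hj hj1 hj2 => h (j+1) (by omega) (by omega) (by omega))
    have h0 : g 0 = f 0 := h 0 (by omega) (by omega) (by omega)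
    omega

lemma car_toward : ∀ (i n : ℕ) (f g : ℕ → ℕ), i + 1 < n → g (i+1) + 2 = f (i+1) →
    g i = f i + 1 → (∀ j, j < n → j ≠ i → j ≠ i+1 → g j = f j) →
    car g n ≤ car f n
  | 0, n, f, g, hin, hi1, hi, h => by
    obtain ⟨k, rfl⟩ : ∃ k, n = k + 1 := ⟨n - 1, by omega⟩
    simp only [car_succ]
    have hs : car (fun j => g (j+1)) k + 1 ≤ car (fun j => f (j+1)) k :=
      car_headsub k _ _ (by omega) hi1 (fun j hj hjk => h (j+1) (by omega) (by omega) (by omega))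
    omega
  | i+1, n, f, g, hin, hi1, hi, h => by
    obtain ⟨k, rfl⟩ : ∃ k, n = k + 1 := ⟨n - 1, by omega⟩
    simp only [car_succ]
    have hs : car (fun j => g (j+1)) k ≤ car (fun j => f (j+1)) k :=
      car_toward i k _ _ (by omega) hi1 hi (fun j hj hj1 hj2 => h (j+1) (by omega) (by omega) (by omega))
    have h0 : g 0 = f 0 := h 0 (by omega) (by omega) (by omega)
    omega

lemma car_alt : ∀ (n : ℕ) (f : ℕ → ℕ), (∀ j, j < n → f j ≤ 3) →
    ((∀ j, j < n → j % 2 = 0 → f j = 0) → car f n = 0) ∧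
    ((∀ j, j < n → j % 2 = 1 → f j = 0) → car f n ≤ 1)
  | 0, f, _ => ⟨fun _ => rfl, fun _ => by simp [car]⟩
  | n+1, f, hb => by
    have IH := car_alt n (fun j => f (j+1)) (fun j hj => hb (j+1) (by omega))
    constructor
    · intro h
      have h0 : f 0 = 0 := h 0 (by omega) (by omega)
      have h1 : car (fun j => f (j+1)) n ≤ 1 :=
        IH.2 (fun j hj hj2 => h (j+1) (by omega) (by omega))
      simp only [car_succ]; omega
    · intro h
      have h1 : car (fun j => f (j+1)) n = 0 :=
        IH.1 (fun j hj hj2 => h (j+1) (by omega) (by omega))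
      have h0 := hb 0 (by omega)
      simp only [car_succ]; omega


def carL (b : ℕ → ℕ) (p : ℕ) : ℕ := car (fun j => b (p - 1 - j)) p
def carR (N : ℕ) (b : ℕ → ℕ) (p : ℕ) : ℕ := car (fun j => b (p + 1 + j)) (N - p)

def phi (N : ℕ) (e : ℕ → ℕ → ℕ) (r p : ℕ) : ℕ :=
  e r p + carL (e r) p + carR N (e r) p +
    2 * (e (r+1) p + (if r = 0 then 0 else e (r-1) p))

def PInv (N : ℕ) (e : ℕ → ℕ → ℕ) : Prop :=
  (∀ r c, r % 5 = 2 ∨ r % 5 = 3 → e r c = 0) ∧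
  (∀ r c, r % 5 = 1 ∨ r % 5 = 4 → e r c ≤ 1) ∧
  (∀ r p, r % 5 = 0 → phi N e r p ≤ 2 + (1 - p % 2))

lemma inv_step (N : ℕ) (e e' : ℕ → ℕ → ℕ) (ru cu rv cv : ℕ)
    (hcu : cu ≤ N) (hcv : cv ≤ N)
    (hadj : (ru = rv ∧ (cu + 1 = cv ∨ cv + 1 = cu)) ∨ (cu = cv ∧ (ru + 1 = rv ∨ rv + 1 = ru)))
    (h2 : 2 ≤ e ru cu)
    (he' : ∀ r c, e' r c = if r = ru ∧ c = cu then e ru cu - 2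
        else if r = rv ∧ c = cv then e rv cv + 1 else e r c)
    (hinv : PInv N e) : PInv N e' := by
  obtain ⟨hbad, hedge, hphi⟩ := hinv
  have hru0 : ru % 5 = 0 := by
    rcases (by omega : ru % 5 = 0 ∨ ru % 5 = 1 ∨ ru % 5 = 2 ∨ ru % 5 = 3 ∨ ru % 5 = 4) with
      h|h|h|h|h
    · exact h
    · have := hedge ru cu (Or.inl h); omega
    · have := hbad ru cu (Or.inl h); omega
    · have := hbad ru cu (Or.inr h); omega
    · have := hedge ru cu (Or.inr h); omega
  rcases hadj with ⟨hreq, hcadj⟩ | ⟨hceq, hradj⟩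
  · -- horizontal move, rv = ru
    subst hreq
    have hcne : cu ≠ cv := by omega
    have hfcu : e' ru cu + 2 = e ru cu := by rw [he']; simp [hcne]; omega
    have hfcv : e' ru cv = e ru cv + 1 := by
      rw [he', if_neg (by simp; intro _; omega), if_pos ⟨rfl, rfl⟩]
    have hfo : ∀ x, x ≠ cu → x ≠ cv → e' ru x = e ru x := by
      intro x h1 h2x; rw [he', if_neg (by simp [h1]), if_neg (by simp [h2x])]
    have hrow : ∀ r c, r ≠ ru → e' r c = e r c := by
      intro r c hr; rw [he', if_neg (by simp [hr]), if_neg (by simp [hr])]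
    refine ⟨?_, ?_, ?_⟩
    · intro r c hr
      rw [hrow r c (by omega)]; exact hbad r c hr
    · intro r c hr
      rw [hrow r c (by omega)]; exact hedge r c hr
    · intro r p hr0
      by_cases hrru : r = ru
      · subst hrru
        have hup : e' (r+1) p = e (r+1) p := hrow _ _ (by omega)
        have hdown : (if r = 0 then 0 else e' (r-1) p) =
            (if r = 0 then 0 else e (r-1) p) := by
          rcases Nat.eq_zero_or_pos r with h0|h0
          · simp [h0]
          · rw [if_neg (by omega), if_neg (by omega), hrow _ _ (by omega)]
        have key : phi N e' r p ≤ phi N e r p := by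
          rcases (by omega : cu = p ∨ cv = p ∨ (p < cu ∧ p < cv) ∨ (cu < p ∧ cv < p)) with
            hP|hP|⟨hP1,hP2⟩|⟨hP1,hP2⟩
          · -- move starts at p
            subst hP
            rcases (by omega : cv + 1 = cu ∨ cu + 1 = cv) with hc|hc
            · -- move to the left
              have hL : carL (e' r) cu ≤ carL (e r) cu + 1 := by
                unfold carL
                have hx : e' r (cu - 1 - 0) = e r (cu - 1 - 0) + 1 := by
                  rw [show cu - 1 - 0 = cv from by omega]; exact hfcv
                exact car_headadd _ _ _ hx (fun j hj hjc => hfo _ (by omega) (by omega))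
              have hR : carR N (e' r) cu = carR N (e r) cu := by
                unfold carR; exact car_congr _ _ _ (fun j hj => hfo _ (by omega) (by omega))
              simp only [phi]; omega
            · -- move to the right
              have hR : carR N (e' r) cu ≤ carR N (e r) cu + 1 := by
                unfold carR
                have hx : e' r (cu + 1 + 0) = e r (cu + 1 + 0) + 1 := by
                  rw [show cu + 1 + 0 = cv from by omega]; exact hfcv
                exact car_headadd _ _ _ hx (fun j hj hjc => hfo _ (by omega) (by omega))
              have hL : carL (e' r) cu = carL (e r) cu := by
                unfold carL; exact car_congr _ _ _ (fun j hj => hfo _ (by omega) (by omega))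
              simp only [phi]; omega
          · -- move ends at p
            subst hP
            rcases (by omega : cu + 1 = cv ∨ cv + 1 = cu) with hc|hc
            · -- arrival from the left
              have hL : carL (e' r) cv + 1 ≤ carL (e r) cv := by
                unfold carL
                have hx : e' r (cv - 1 - 0) + 2 = e r (cv - 1 - 0) := by
                  rw [show cv - 1 - 0 = cu from by omega]; exact hfcu
                exact car_headsub _ _ _ (by omega) hx
                  (fun j hj hjc => hfo _ (by omega) (by omega))
              have hR : carR N (e' r) cv = carR N (e r) cv := by
                unfold carR; exact car_congr _ _ _ (fun j hj => hfo _ (by omega) (by omega))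
              simp only [phi]; omega
            · -- arrival from the right
              have hR : carR N (e' r) cv + 1 ≤ carR N (e r) cv := by
                unfold carR
                have hx : e' r (cv + 1 + 0) + 2 = e r (cv + 1 + 0) := by
                  rw [show cv + 1 + 0 = cu from by omega]; exact hfcu
                exact car_headsub _ _ _ (by omega) hx
                  (fun j hj hjc => hfo _ (by omega) (by omega))
              have hL : carL (e' r) cv = carL (e r) cv := by
                unfold carL; exact car_congr _ _ _ (fun j hj => hfo _ (by omega) (by omega))
              simp only [phi]; omega
          · -- move entirely to the right of p
            have hL : carL (e' r) p = carL (e r) p := by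
              unfold carL; exact car_congr _ _ _ (fun j hj => hfo _ (by omega) (by omega))
            have hbp : e' r p = e r p := hfo p (by omega) (by omega)
            have hR : carR N (e' r) p ≤ carR N (e r) p := by
              unfold carR
              rcases (by omega : cu + 1 = cv ∨ cv + 1 = cu) with hc|hc
              · refine car_away (cu - p - 1) (N - p) _ _ (by omega) ?_ ?_ ?_
                · show e' r (p + 1 + (cu - p - 1)) + 2 = e r (p + 1 + (cu - p - 1))
                  rw [show p + 1 + (cu - p - 1) = cu from by omega]; exact hfcu
                · show e' r (p + 1 + (cu - p - 1 + 1)) = e r (p + 1 + (cu - p - 1 + 1)) + 1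
                  rw [show p + 1 + (cu - p - 1 + 1) = cv from by omega]; exact hfcv
                · intro j hj hj1 hj2; exact hfo _ (by omega) (by omega)
              · refine car_toward (cv - p - 1) (N - p) _ _ (by omega) ?_ ?_ ?_
                · show e' r (p + 1 + (cv - p - 1 + 1)) + 2 = e r (p + 1 + (cv - p - 1 + 1))
                  rw [show p + 1 + (cv - p - 1 + 1) = cu from by omega]; exact hfcu
                · show e' r (p + 1 + (cv - p - 1)) = e r (p + 1 + (cv - p - 1)) + 1
                  rw [show p + 1 + (cv - p - 1) = cv from by omega]; exact hfcv
                · intro j hj hj1 hj2; exact hfo _ (by omega) (by omega)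
            simp only [phi]; omega
          · -- move entirely to the left of p
            have hR : carR N (e' r) p = carR N (e r) p := by
              unfold carR; exact car_congr _ _ _ (fun j hj => hfo _ (by omega) (by omega))
            have hbp : e' r p = e r p := hfo p (by omega) (by omega)
            have hL : carL (e' r) p ≤ carL (e r) p := by
              unfold carL
              rcases (by omega : cu + 1 = cv ∨ cv + 1 = cu) with hc|hc
              · refine car_toward (p - 1 - cv) (p) _ _ (by omega) ?_ ?_ ?_
                · show e' r (p - 1 - (p - 1 - cv + 1)) + 2 = e r (p - 1 - (p - 1 - cv + 1))
                  rw [show p - 1 - (p - 1 - cv + 1) = cu from by omega]; exact hfcu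
                · show e' r (p - 1 - (p - 1 - cv)) = e r (p - 1 - (p - 1 - cv)) + 1
                  rw [show p - 1 - (p - 1 - cv) = cv from by omega]; exact hfcv
                · intro j hj hj1 hj2; exact hfo _ (by omega) (by omega)
              · refine car_away (p - 1 - cu) (p) _ _ (by omega) ?_ ?_ ?_
                · show e' r (p - 1 - (p - 1 - cu)) + 2 = e r (p - 1 - (p - 1 - cu))
                  rw [show p - 1 - (p - 1 - cu) = cu from by omega]; exact hfcu
                · show e' r (p - 1 - (p - 1 - cu + 1)) = e r (p - 1 - (p - 1 - cu + 1)) + 1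
                  rw [show p - 1 - (p - 1 - cu + 1) = cv from by omega]; exact hfcv
                · intro j hj hj1 hj2; exact hfo _ (by omega) (by omega)
            simp only [phi]; omega
        exact le_trans key (hphi r p hr0)
      · have heq : phi N e' r p = phi N e r p := by
          simp only [phi]
          have h1 : e' r p = e r p := hrow _ _ hrru
          have h2x : e' (r+1) p = e (r+1) p := hrow _ _ (by omega)
          have h3 : (if r = 0 then 0 else e' (r-1) p) = (if r = 0 then 0 else e (r-1) p) := by
            rcases Nat.eq_zero_or_pos r with h0|h0
            · simp [h0]
            · rw [if_neg (by omega), if_neg (by omega), hrow _ _ (by omega)]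
          have h4 : carL (e' r) p = carL (e r) p := by
            unfold carL; exact car_congr _ _ _ (fun j hj => hrow _ _ hrru)
          have h5 : carR N (e' r) p = carR N (e r) p := by
            unfold carR; exact car_congr _ _ _ (fun j hj => hrow _ _ hrru)
          omega
        rw [heq]; exact hphi r p hr0
  · -- vertical move: a "fire"
    subst hceq
    have hrne : ru ≠ rv := by omega
    have hfcu : e' ru cu + 2 = e ru cu := by
      rw [he', if_pos ⟨rfl, rfl⟩]; omega
    have hfv : e' rv cu = e rv cu + 1 := by
      rw [he', if_neg (by simp; intro h; omega), if_pos ⟨rfl, rfl⟩]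
    have hfo : ∀ r c, (r ≠ ru ∨ c ≠ cu) → (r ≠ rv ∨ c ≠ cu) → e' r c = e r c := by
      intro r c h1 h2x
      rw [he', if_neg (by rcases h1 with h|h <;> simp [h]),
        if_neg (by rcases h2x with h|h <;> simp [h])]
    have hv0 : e rv cu = 0 := by
      have hb3 : phi N e ru cu ≤ 3 := le_trans (hphi ru cu hru0) (by omega)
      simp only [phi] at hb3
      rcases hradj with h|h
      · have hbridge : e (ru+1) cu = e rv cu := by rw [h]
        omega
      · rw [if_neg (by omega), show ru - 1 = rv from by omega] at hb3
        omega
    refine ⟨?_, ?_, ?_⟩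
    · intro r c hr
      rw [hfo r c (Or.inl (by omega)) (Or.inl (by omega))]
      exact hbad r c hr
    · intro r c hr
      by_cases hrv : r = rv ∧ c = cu
      · obtain ⟨rfl, rfl⟩ := hrv; rw [hfv, hv0]
      · have heq : e' r c = e r c := by
          push_neg at hrv
          rcases eq_or_ne r rv with h|h
          · exact hfo r c (Or.inl (by omega)) (Or.inr (hrv h))
          · exact hfo r c (Or.inl (by omega)) (Or.inl h)
        rw [heq]; exact hedge r c hr
    · intro r p hr0
      by_cases hrru : r = ru
      · subst hrru
        have key : phi N e' r p ≤ phi N e r p := by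
          have hrowr : ∀ x, x ≠ cu → e' r x = e r x := fun x hx =>
            hfo r x (Or.inr hx) (Or.inl hrne)
          by_cases hp : p = cu
          · subst hp
            have hL : carL (e' r) p = carL (e r) p := by
              unfold carL; exact car_congr _ _ _ (fun j hj => hrowr _ (by omega))
            have hR : carR N (e' r) p = carR N (e r) p := by
              unfold carR; exact car_congr _ _ _ (fun j hj => hrowr _ (by omega))
            rcases hradj with h|h
            · -- up fire
              have hup : e' (r+1) p = e (r+1) p + 1 := by rw [h]; exact hfv
              have hdown : (if r = 0 then 0 else e' (r-1) p) =
                  (if r = 0 then 0 else e (r-1) p) := by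
                rcases Nat.eq_zero_or_pos r with h0|h0
                · simp [h0]
                · rw [if_neg (by omega), if_neg (by omega)]
                  exact hfo _ _ (Or.inl (by omega)) (Or.inl (by omega))
              simp only [phi]; omega
            · -- down fire
              have hr1 : r ≠ 0 := by omega
              have hdown : e' (r-1) p = e (r-1) p + 1 := by
                rw [show r - 1 = rv from by omega]; exact hfv
              have hup : e' (r+1) p = e (r+1) p :=
                hfo _ _ (Or.inl (by omega)) (Or.inl (by omega))
              simp only [phi]
              rw [if_neg hr1, if_neg hr1]
              omega
          · -- fire in another column
            have hL : carL (e' r) p ≤ carL (e r) p := by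
              unfold carL
              refine car_mono _ _ _ (fun j hj => ?_)
              by_cases hx : p - 1 - j = cu
              · rw [hx]; omega
              · rw [hrowr _ hx]
            have hR : carR N (e' r) p ≤ carR N (e r) p := by
              unfold carR
              refine car_mono _ _ _ (fun j hj => ?_)
              by_cases hx : p + 1 + j = cu
              · rw [hx]; omega
              · rw [hrowr _ hx]
            have hbp : e' r p = e r p := hrowr _ hp
            have hup : e' (r+1) p = e (r+1) p := by
              refine hfo _ _ (Or.inl (by omega)) ?_
              rcases hradj with h|h
              · exact Or.inr (by omega)
              · exact Or.inl (by omega)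
            have hdown : (if r = 0 then 0 else e' (r-1) p) =
                (if r = 0 then 0 else e (r-1) p) := by
              rcases Nat.eq_zero_or_pos r with h0|h0
              · simp [h0]
              · rw [if_neg (by omega), if_neg (by omega)]
                refine hfo _ _ (Or.inl (by omega)) ?_
                rcases hradj with h|h
                · exact Or.inl (by omega)
                · exact Or.inr (by omega)
            simp only [phi]; omega
        exact le_trans key (hphi r p hr0)
      · have hrowr : ∀ c', e' r c' = e r c' := by
          intro c'
          refine hfo r c' (Or.inl hrru) ?_
          rcases hradj with h|h
          · exact Or.inl (by omega)
          · exact Or.inl (by omega)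
        have heq : phi N e' r p = phi N e r p := by
          simp only [phi]
          have h2x : e' (r+1) p = e (r+1) p := by
            refine hfo _ _ (Or.inl (by omega)) ?_
            rcases hradj with h|h
            · exact Or.inl (by omega)
            · exact Or.inl (by omega)
          have h3 : (if r = 0 then 0 else e' (r-1) p) = (if r = 0 then 0 else e (r-1) p) := by
            rcases Nat.eq_zero_or_pos r with h0|h0
            · simp [h0]
            · rw [if_neg (by omega), if_neg (by omega)]
              refine hfo _ _ (Or.inl (by omega)) ?_
              rcases hradj with h|h
              · exact Or.inl (by omega)
              · exact Or.inl (by omega)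
          have h4 : carL (e' r) p = carL (e r) p := by
            unfold carL; exact car_congr _ _ _ (fun j hj => hrowr _)
          have h5 : carR N (e' r) p = carR N (e r) p := by
            unfold carR; exact car_congr _ _ _ (fun j hj => hrowr _)
          rw [hrowr p]
          omega
        rw [heq]; exact hphi r p hr0


lemma inv_init (N : ℕ) (e : ℕ → ℕ → ℕ) (hb : ∀ r c, e r c ≤ 3)
    (h0 : ∀ r c, r % 5 ≠ 0 ∨ c % 2 ≠ 0 → e r c = 0) : PInv N e := by
  refine ⟨fun r c hr => h0 r c (Or.inl (by omega)),
    fun r c hr => le_trans (le_of_eq (h0 r c (Or.inl (by omega)))) (by omega),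
    fun r p hr => ?_⟩
  have hup : e (r+1) p = 0 := h0 _ _ (Or.inl (by omega))
  have hdown : (if r = 0 then 0 else e (r-1) p) = 0 := by
    rcases Nat.eq_zero_or_pos r with h|h
    · simp [h]
    · rw [if_neg (by omega)]; exact h0 _ _ (Or.inl (by omega))
  rcases (by omega : p % 2 = 0 ∨ p % 2 = 1) with hp|hp
  · have hL : carL (e r) p = 0 := by
      unfold carL
      exact (car_alt _ _ (fun j hj => hb _ _)).1
        (fun j hj hj2 => h0 _ _ (Or.inr (by omega)))
    have hR : carR N (e r) p = 0 := by
      unfold carR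
      exact (car_alt _ _ (fun j hj => hb _ _)).1
        (fun j hj hj2 => h0 _ _ (Or.inr (by omega)))
    have := hb r p
    simp only [phi]; omega
  · have hL : carL (e r) p ≤ 1 := by
      unfold carL
      exact (car_alt _ _ (fun j hj => hb _ _)).2
        (fun j hj hj2 => h0 _ _ (Or.inr (by omega)))
    have hR : carR N (e r) p ≤ 1 := by
      unfold carR
      exact (car_alt _ _ (fun j hj => hb _ _)).2
        (fun j hj hj2 => h0 _ _ (Or.inr (by omega)))
    have hbp : e r p = 0 := h0 _ _ (Or.inr (by omega))
    simp only [phi]; omega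


def Dinit (m n : ℕ) : Fin (5*m+1) × Fin (2*n+1) → ℕ :=
  fun p => if p.1.1 % 5 = 0 ∧ p.2.1 % 2 = 0 then 3 else 0

lemma grid_adj_s13 {R C : ℕ} {p q : Fin R × Fin C}
    (h : (p.1.1 = q.1.1 ∧ (p.2.1 + 1 = q.2.1 ∨ q.2.1 + 1 = p.2.1)) ∨
         (p.2.1 = q.2.1 ∧ (p.1.1 + 1 = q.1.1 ∨ q.1.1 + 1 = p.1.1))) : (fgrid R C).Adj p q := by
  show ((p.1 : ℤ) - q.1).natAbs + ((p.2 : ℤ) - q.2).natAbs = 1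
  omega

lemma grid_adj_iff {R C : ℕ} {p q : Fin R × Fin C} : (fgrid R C).Adj p q ↔
    ((p.1.1 = q.1.1 ∧ (p.2.1 + 1 = q.2.1 ∨ q.2.1 + 1 = p.2.1)) ∨
     (p.2.1 = q.2.1 ∧ (p.1.1 + 1 = q.1.1 ∨ q.1.1 + 1 = p.1.1))) := by
  constructor
  · intro h
    have h' : ((p.1 : ℤ) - q.1).natAbs + ((p.2 : ℤ) - q.2).natAbs = 1 := h
    omega
  · exact grid_adj_s13

def emb (m n : ℕ) (D : Fin (5*m+1) × Fin (2*n+1) → ℕ) : ℕ → ℕ → ℕ :=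
  fun r c => if h : r < 5*m+1 ∧ c < 2*n+1 then D (⟨r, h.1⟩, ⟨c, h.2⟩) else 0

lemma emb_apply (m n : ℕ) (D : Fin (5*m+1) × Fin (2*n+1) → ℕ)
    (p : Fin (5*m+1) × Fin (2*n+1)) : emb m n D p.1.1 p.2.1 = D p := by
  have h : p.1.1 < 5*m+1 ∧ p.2.1 < 2*n+1 := ⟨p.1.2, p.2.2⟩
  simp only [emb, dif_pos h]

lemma move_emb {m n : ℕ} {D D' : Fin (5*m+1) × Fin (2*n+1) → ℕ}
    (hmv : PebblingMove (fgrid (5*m+1) (2*n+1)) D D')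
    (hinv : PInv (2*n) (emb m n D)) : PInv (2*n) (emb m n D') := by
  obtain ⟨u, v, hadj, h2, rfl⟩ := hmv
  have huv : u ≠ v := (fgrid _ _).ne_of_adj hadj
  refine inv_step (2*n) (emb m n D) _ u.1.1 u.2.1 v.1.1 v.2.1
    (by have := u.2.2; omega) (by have := v.2.2; omega)
    ?_ (by rw [emb_apply]; exact h2) ?_ hinv
  · rcases grid_adj_iff.1 hadj with ⟨h1, h2'⟩ | ⟨h1, h2'⟩
    · exact Or.inl ⟨h1, h2'⟩
    · exact Or.inr ⟨h1, h2'⟩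
  · intro r c
    by_cases hin : r < 5*m+1 ∧ c < 2*n+1
    · have key : ∀ (E : Fin (5*m+1) × Fin (2*n+1) → ℕ),
          emb m n E r c = E (⟨r, hin.1⟩, ⟨c, hin.2⟩) := by
        intro E; simp only [emb, dif_pos hin]
      set q : Fin (5*m+1) × Fin (2*n+1) := (⟨r, hin.1⟩, ⟨c, hin.2⟩) with hq
      have hqu : (r = u.1.1 ∧ c = u.2.1) ↔ q = u := by
        simp [hq, Prod.ext_iff, Fin.ext_iff]
      have hqv : (r = v.1.1 ∧ c = v.2.1) ↔ q = v := by
        simp [hq, Prod.ext_iff, Fin.ext_iff]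
      rw [key]
      by_cases h1 : q = u
      · rw [if_pos (hqu.2 h1), Function.update_of_ne (h1 ▸ huv), h1,
          Function.update_self, emb_apply]
      · by_cases h2' : q = v
        · rw [if_neg (fun hc => h1 (hqu.1 hc)), if_pos (hqv.2 h2'), h2',
            Function.update_self, emb_apply]
        · rw [if_neg (fun hc => h1 (hqu.1 hc)), if_neg (fun hc => h2' (hqv.1 hc)),
            Function.update_of_ne h2', Function.update_of_ne h1, key]
    · have h1 : ¬ (r = u.1.1 ∧ c = u.2.1) := by
        rintro ⟨rfl, rfl⟩; exact hin ⟨u.1.2, u.2.2⟩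
      have h2' : ¬ (r = v.1.1 ∧ c = v.2.1) := by
        rintro ⟨rfl, rfl⟩; exact hin ⟨v.1.2, v.2.2⟩
      rw [if_neg h1, if_neg h2']
      simp only [emb, dif_neg hin]


lemma reach_inv {m n : ℕ} {D0 D' : Fin (5*m+1) × Fin (2*n+1) → ℕ}
    (h : Relation.ReflTransGen (PebblingMove (fgrid (5*m+1) (2*n+1))) D0 D')
    (h0 : PInv (2*n) (emb m n D0)) : PInv (2*n) (emb m n D') := by
  induction h with
  | refl => exact h0
  | tail _ hstep ih => exact move_emb hstep ih

lemma inv_Dinit (m n : ℕ) : PInv (2*n) (emb m n (Dinit m n)) := by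
  apply inv_init
  · intro r c
    simp only [emb, Dinit]
    split_ifs <;> omega
  · intro r c h
    simp only [emb, Dinit]
    split_ifs with h1 h2
    · exfalso; rcases h with h|h <;> simp_all
    · rfl
    · rfl

lemma not_reach_bad (m n : ℕ) (t : Fin (5*m+1) × Fin (2*n+1))
    (ht : t.1.1 % 5 = 2 ∨ t.1.1 % 5 = 3) :
    ¬ PebbleReachable (fgrid (5*m+1) (2*n+1)) (Dinit m n) t := by
  rintro ⟨D', hsteps, h1⟩
  have hinv := reach_inv hsteps (inv_Dinit m n)
  have h0 := hinv.1 t.1.1 t.2.1 ht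
  rw [emb_apply] at h0
  omega

lemma reach_one {V : Type*} [DecidableEq V] (G : SimpleGraph V) (D : V → ℕ) (u t : V)
    (hadj : G.Adj u t) (h2 : 2 ≤ D u) : PebbleReachable G D t :=
  ⟨_, Relation.ReflTransGen.single ⟨u, t, hadj, h2, rfl⟩,
    by rw [Function.update_self]; omega⟩

lemma reach_three {V : Type*} [DecidableEq V] (G : SimpleGraph V) (D : V → ℕ) (a b w t : V)
    (hba : b ≠ a) (hbw : b ≠ w) (haw : G.Adj a w) (hbw' : G.Adj b w) (hwt : G.Adj w t)
    (h2a : 2 ≤ D a) (h2b : 2 ≤ D b) : PebbleReachable G D t := by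
  set D1 := Function.update (Function.update D a (D a - 2)) w (D w + 1) with hD1
  have m1 : PebblingMove G D D1 := ⟨a, w, haw, h2a, rfl⟩
  have hD1b : 2 ≤ D1 b := by
    rw [hD1, Function.update_of_ne hbw, Function.update_of_ne hba]; exact h2b
  set D2 := Function.update (Function.update D1 b (D1 b - 2)) w (D1 w + 1) with hD2
  have m2 : PebblingMove G D1 D2 := ⟨b, w, hbw', hD1b, rfl⟩
  have hD2w : 2 ≤ D2 w := by
    rw [hD2, Function.update_self, hD1, Function.update_self]; omega
  set D3 := Function.update (Function.update D2 w (D2 w - 2)) t (D2 t + 1) with hD3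
  have m3 : PebblingMove G D2 D3 := ⟨w, t, hwt, hD2w, rfl⟩
  exact ⟨D3, Relation.ReflTransGen.head m1 (Relation.ReflTransGen.head m2
    (Relation.ReflTransGen.single m3)), by rw [hD3, Function.update_self]; omega⟩

lemma pne {R C : ℕ} {p q : Fin R × Fin C} (h : p.1.1 ≠ q.1.1 ∨ p.2.1 ≠ q.2.1) : p ≠ q := by
  intro he; subst he; rcases h with h|h <;> exact h rfl

lemma reach_good (m n : ℕ) (t : Fin (5*m+1) × Fin (2*n+1))
    (ht : t.1.1 % 5 = 0 ∨ t.1.1 % 5 = 1 ∨ t.1.1 % 5 = 4) :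
    PebbleReachable (fgrid (5*m+1) (2*n+1)) (Dinit m n) t := by
  obtain ⟨⟨r, hr⟩, ⟨c, hc⟩⟩ := t
  simp only at ht
  rcases (by omega : c % 2 = 0 ∨ c % 2 = 1) with hc2|hc2
  · -- even column
    rcases ht with h|h|h
    · refine ⟨Dinit m n, Relation.ReflTransGen.refl, ?_⟩
      have : Dinit m n (⟨r, hr⟩, ⟨c, hc⟩) = 3 := if_pos ⟨h, hc2⟩
      omega
    · refine reach_one _ _ ((⟨r-1, by omega⟩ : Fin (5*m+1)), (⟨c, hc⟩ : Fin (2*n+1))) _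
        (grid_adj_s13 (Or.inr ⟨rfl, Or.inl (by simp; omega)⟩)) ?_
      have : Dinit m n ((⟨r-1, by omega⟩ : Fin (5*m+1)), (⟨c, hc⟩ : Fin (2*n+1))) = 3 :=
        if_pos ⟨by simp; omega, hc2⟩
      omega
    · refine reach_one _ _ ((⟨r+1, by omega⟩ : Fin (5*m+1)), (⟨c, hc⟩ : Fin (2*n+1))) _
        (grid_adj_s13 (Or.inr ⟨rfl, Or.inr (by simp)⟩)) ?_
      have : Dinit m n ((⟨r+1, by omega⟩ : Fin (5*m+1)), (⟨c, hc⟩ : Fin (2*n+1))) = 3 :=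
        if_pos ⟨by simp; omega, hc2⟩
      omega
  · -- odd column
    have hc1 : 1 ≤ c := by omega
    have hcn : c + 1 < 2*n+1 := by omega
    rcases ht with h|h|h
    · -- same row, one horizontal move
      refine reach_one _ _ ((⟨r, hr⟩ : Fin (5*m+1)), (⟨c-1, by omega⟩ : Fin (2*n+1))) _
        (grid_adj_s13 (Or.inl ⟨rfl, Or.inl (by simp; omega)⟩)) ?_
      have : Dinit m n ((⟨r, hr⟩ : Fin (5*m+1)), (⟨c-1, by omega⟩ : Fin (2*n+1))) = 3 :=
        if_pos ⟨h, by simp; omega⟩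
      omega
    · -- row below target is pebbled
      refine reach_three _ _
        ((⟨r-1, by omega⟩ : Fin (5*m+1)), (⟨c-1, by omega⟩ : Fin (2*n+1)))
        ((⟨r-1, by omega⟩ : Fin (5*m+1)), (⟨c+1, hcn⟩ : Fin (2*n+1)))
        ((⟨r-1, by omega⟩ : Fin (5*m+1)), (⟨c, hc⟩ : Fin (2*n+1))) _
        (pne (Or.inr (by simp; omega))) (pne (Or.inr (by simp)))
        (grid_adj_s13 (Or.inl ⟨rfl, Or.inl (by simp; omega)⟩))
        (grid_adj_s13 (Or.inl ⟨rfl, Or.inr (by simp)⟩))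
        (grid_adj_s13 (Or.inr ⟨rfl, Or.inl (by simp; omega)⟩)) ?_ ?_
      · have : Dinit m n ((⟨r-1, by omega⟩ : Fin (5*m+1)), (⟨c-1, by omega⟩ : Fin (2*n+1))) = 3 :=
          if_pos ⟨by simp; omega, by simp; omega⟩
        omega
      · have : Dinit m n ((⟨r-1, by omega⟩ : Fin (5*m+1)), (⟨c+1, hcn⟩ : Fin (2*n+1))) = 3 :=
          if_pos ⟨by simp; omega, by simp; omega⟩
        omega
    · -- row above target is pebbled
      refine reach_three _ _
        ((⟨r+1, by omega⟩ : Fin (5*m+1)), (⟨c-1, by omega⟩ : Fin (2*n+1)))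
        ((⟨r+1, by omega⟩ : Fin (5*m+1)), (⟨c+1, hcn⟩ : Fin (2*n+1)))
        ((⟨r+1, by omega⟩ : Fin (5*m+1)), (⟨c, hc⟩ : Fin (2*n+1))) _
        (pne (Or.inr (by simp; omega))) (pne (Or.inr (by simp)))
        (grid_adj_s13 (Or.inl ⟨rfl, Or.inl (by simp; omega)⟩))
        (grid_adj_s13 (Or.inl ⟨rfl, Or.inr (by simp)⟩))
        (grid_adj_s13 (Or.inr ⟨rfl, Or.inr (by simp)⟩)) ?_ ?_
      · have : Dinit m n ((⟨r+1, by omega⟩ : Fin (5*m+1)), (⟨c-1, by omega⟩ : Fin (2*n+1))) = 3 :=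
          if_pos ⟨by simp; omega, by simp; omega⟩
        omega
      · have : Dinit m n ((⟨r+1, by omega⟩ : Fin (5*m+1)), (⟨c+1, hcn⟩ : Fin (2*n+1))) = 3 :=
          if_pos ⟨by simp; omega, by simp; omega⟩
        omega


lemma sum_range5 (m K : ℕ) :
    (∑ i ∈ Finset.range (5*m+1), if i % 5 = 0 ∨ i % 5 = 1 ∨ i % 5 = 4 then K else 0)
      = (3*m+1) * K := by
  induction m with
  | zero => simp
  | succ m ih =>
    have h5 : 5*(m+1)+1 = (5*m+1)+1+1+1+1+1 := by ring
    have hX : (3*(m+1)+1)*K = (3*m+1)*K + 3*K := by ring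
    rw [h5, Finset.sum_range_succ, Finset.sum_range_succ, Finset.sum_range_succ,
      Finset.sum_range_succ, Finset.sum_range_succ, ih, hX]
    split_ifs <;> omega

lemma sum_range5' (m K : ℕ) :
    (∑ i ∈ Finset.range (5*m+1), if i % 5 = 0 then K else 0) = (m+1) * K := by
  induction m with
  | zero => simp
  | succ m ih =>
    have h5 : 5*(m+1)+1 = (5*m+1)+1+1+1+1+1 := by ring
    have hX : (m+1+1)*K = (m+1)*K + K := by ring
    rw [h5, Finset.sum_range_succ, Finset.sum_range_succ, Finset.sum_range_succ,
      Finset.sum_range_succ, Finset.sum_range_succ, ih, hX]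
    split_ifs <;> omega

lemma sum_range2 (n K : ℕ) :
    (∑ i ∈ Finset.range (2*n+1), if i % 2 = 0 then K else 0) = (n+1) * K := by
  induction n with
  | zero => simp
  | succ n ih =>
    have h2 : 2*(n+1)+1 = (2*n+1)+1+1 := by ring
    have hX : (n+1+1)*K = (n+1)*K + K := by ring
    rw [h2, Finset.sum_range_succ, Finset.sum_range_succ, ih, hX]
    split_ifs <;> omega

lemma sum_D (m n : ℕ) : (∑ v, Dinit m n v) = 3*(n+1)*(m+1) := by
  rw [Fintype.sum_prod_type]
  have hrow : ∀ a : Fin (5*m+1), (∑ b : Fin (2*n+1), Dinit m n (a, b))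
      = if a.1 % 5 = 0 then 3*(n+1) else 0 := by
    intro a
    by_cases ha : a.1 % 5 = 0
    · rw [if_pos ha]
      have h1 : ∀ b : Fin (2*n+1), Dinit m n (a,b) = if b.1 % 2 = 0 then 3 else 0 := by
        intro b; simp [Dinit, ha]
      rw [Finset.sum_congr rfl (fun b _ => h1 b),
        Fin.sum_univ_eq_sum_range (fun i => if i % 2 = 0 then 3 else 0) (2*n+1),
        sum_range2]
      ring
    · simp [Dinit, ha]
  rw [Finset.sum_congr rfl (fun a _ => hrow a),
    Fin.sum_univ_eq_sum_range (fun i => if i % 5 = 0 then 3*(n+1) else 0) (5*m+1),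
    sum_range5']
  ring

lemma card_good (m n : ℕ) :
    {p : Fin (5*m+1) × Fin (2*n+1) | p.1.1 % 5 = 0 ∨ p.1.1 % 5 = 1 ∨ p.1.1 % 5 = 4}.ncard
      = (3*m+1) * (2*n+1) := by
  classical
  rw [Set.ncard_eq_toFinset_card']
  simp only [Set.toFinset_setOf]
  rw [Finset.card_filter]
  rw [Fintype.sum_prod_type]
  have hrow : ∀ a : Fin (5*m+1),
      (∑ _b : Fin (2*n+1), if (a.1 % 5 = 0 ∨ a.1 % 5 = 1 ∨ a.1 % 5 = 4) then 1 else 0)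
      = if (a.1 % 5 = 0 ∨ a.1 % 5 = 1 ∨ a.1 % 5 = 4) then (2*n+1) else 0 := by
    intro a
    by_cases h : a.1 % 5 = 0 ∨ a.1 % 5 = 1 ∨ a.1 % 5 = 4 <;> simp [h]
  rw [Finset.sum_congr rfl (fun a _ => hrow a),
    Fin.sum_univ_eq_sum_range
      (fun i => if (i % 5 = 0 ∨ i % 5 = 1 ∨ i % 5 = 4) then (2*n+1) else 0) (5*m+1),
    sum_range5]

lemma ratio_lt (m n : ℕ) :
    ((3 * m + 1) * (2 * n + 1) : ℝ) / (3 * (n + 1) * (m + 1)) < 2 := by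
  have hpos : (0:ℝ) < 3 * ((n:ℝ) + 1) * ((m:ℝ) + 1) := by positivity
  rw [div_lt_iff₀ hpos]
  have hm : (0:ℝ) ≤ (m:ℝ) := Nat.cast_nonneg m
  have hn : (0:ℝ) ≤ (n:ℝ) := Nat.cast_nonneg n
  nlinarith


end EveryFifthRowAux

/-- For the distribution with 3 pebbles on every second vertex of every fifth row of the
`(5m+1) × (2n+1)` grid, the reachable vertices are exactly those in rows `≡ 0, 1, 4 (mod 5)`;
there are `(3m+1)(2n+1)` of them, the distribution has `3(n+1)(m+1)` pebbles, and the
covering ratio `(3m+1)(2n+1) / (3(n+1)(m+1))` is less than 2. -/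



theorem every_fifth_row_reach (m n : ℕ) :
    let D : Fin (5 * m + 1) × Fin (2 * n + 1) → ℕ :=
      fun p => if p.1.val % 5 = 0 ∧ p.2.val % 2 = 0 then 3 else 0
    {p | PebbleReachable (fgrid (5 * m + 1) (2 * n + 1)) D p} =
      {p | p.1.val % 5 = 0 ∨ p.1.val % 5 = 1 ∨ p.1.val % 5 = 4} ∧
    {p | PebbleReachable (fgrid (5 * m + 1) (2 * n + 1)) D p}.ncard =
      (3 * m + 1) * (2 * n + 1) ∧
    (∑ v, D v) = 3 * (n + 1) * (m + 1) ∧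
    ((3 * m + 1) * (2 * n + 1) : ℝ) / (3 * (n + 1) * (m + 1)) < 2 := by
  intro D
  have hD : D = Dinit m n := rfl
  have hsets : {p | PebbleReachable (fgrid (5 * m + 1) (2 * n + 1)) D p} =
      {p : Fin (5*m+1) × Fin (2*n+1) |
        p.1.val % 5 = 0 ∨ p.1.val % 5 = 1 ∨ p.1.val % 5 = 4} := by
    rw [hD]
    ext p
    simp only [Set.mem_setOf_eq]
    constructor
    · intro h
      by_contra hb
      push_neg at hb
      exact not_reach_bad m n p (by omega) h
    · intro h
      exact reach_good m n p h
  refine ⟨hsets, ?_, ?_, ratio_lt m n⟩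
  · rw [hsets]
    exact card_good m n
  · rw [hD]
    exact sum_D m n
end
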